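/- arXiv:1705.10065 — 9 statements merged into one kernel-verified Lean document; each statement's English description precedes it below -/
import Mathlib

section
/- For any base b ≥ 2, any letter x ∈ {1,...,b-1}, and any word u over the alphabet {0,...,b-1}, the number of words in L_b occurring as scattered subwords of x00u equals twice the number of words in L_b occurring as scattered subwords of x0u minus the number of words in L_b occurring as scattered subwords of xu. -/
/-- Number of distinct words in `L_b` (no leading zero, or empty) occurring as
scattered subwords (subsequences) of `u`. -/
def lbCount (u : List ℕ) : ℕ :=
  ((u.sublists.filter (fun v => v.head? ≠ some 0)).dedup).length

/-- `S_b(n)`: number of distinct words of `L_b` occurring as scattered subwords of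
the base-`b` expansion of `n` (most significant digit first, `rep_b(0) = ε`). -/
def Sb (b n : ℕ) : ℕ := lbCount ((Nat.digits b n).reverse)

/-- Summatory function `A_b(n) = ∑_{j<n} S_b(j)`. -/
def Asum (b n : ℕ) : ℕ := ∑ j ∈ Finset.range n, Sb b j


section Aux

/-- Finset of all distinct subsequences of `w`. -/
private def SubF (w : List ℕ) : Finset (List ℕ) := w.sublists.toFinset

private lemma mem_SubF {v w : List ℕ} : v ∈ SubF w ↔ v.Sublist w := by
  simp [SubF]

/-- Finset of distinct subsequences of `w` with no leading zero. -/
private def AF (w : List ℕ) : Finset (List ℕ) :=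
  (SubF w).filter (fun v => v.head? ≠ some 0)

private lemma lbCount_eq (u : List ℕ) : lbCount u = (AF u).card := by
  rw [lbCount, AF, SubF, ← List.card_toFinset]
  congr 1
  ext v
  simp

private lemma SubF_cons (a : ℕ) (v : List ℕ) :
    SubF (a :: v) = SubF v ∪ (SubF v).image (a :: ·) := by
  ext w
  simp only [mem_SubF, Finset.mem_union, Finset.mem_image]
  constructor
  · intro h
    rcases List.sublist_cons_iff.mp h with h | ⟨r, rfl, hr⟩
    · exact Or.inl h
    · exact Or.inr ⟨r, hr, rfl⟩
  · rintro (h | ⟨s, hs, rfl⟩)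
    · exact h.trans (List.sublist_cons_self a v)
    · exact List.cons_sublist_cons.mpr (hs)

private lemma SubF_inter_image (a : ℕ) (v : List ℕ) :
    SubF v ∩ (SubF v).image (a :: ·) =
      ((SubF v).filter (fun s => (a :: s).Sublist v)).image (a :: ·) := by
  ext w
  simp only [Finset.mem_inter, Finset.mem_image, Finset.mem_filter, mem_SubF]
  constructor
  · rintro ⟨h1, s, hs, rfl⟩
    exact ⟨s, ⟨hs, h1⟩, rfl⟩
  · rintro ⟨s, ⟨hs, h1⟩, rfl⟩
    exact ⟨h1, s, hs, rfl⟩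

private lemma card_SubF_cons (a : ℕ) (v : List ℕ) :
    (SubF (a :: v)).card + ((SubF v).filter (fun s => (a :: s).Sublist v)).card
      = 2 * (SubF v).card := by
  have h := Finset.card_union_add_card_inter (SubF v) ((SubF v).image (a :: ·))
  rw [← SubF_cons, SubF_inter_image,
    Finset.card_image_of_injective _ (List.cons_injective),
    Finset.card_image_of_injective _ (List.cons_injective)] at h
  omega

/-- `{s ⊑ 0u : 0s ⊑ 0u} = Sub u`. -/
private lemma filter_zero (u : List ℕ) :
    (SubF (0 :: u)).filter (fun s => ((0 : ℕ) :: s).Sublist (0 :: u)) = SubF u := by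
  ext s
  simp only [Finset.mem_filter, mem_SubF]
  constructor
  · rintro ⟨-, h⟩
    exact List.cons_sublist_cons.mp h
  · intro h
    exact ⟨h.trans (List.sublist_cons_self 0 u), List.cons_sublist_cons.mpr h⟩

private lemma card_SubF_key (u : List ℕ) :
    (SubF (0 :: 0 :: u)).card + (SubF u).card = 2 * (SubF (0 :: u)).card := by
  have h := card_SubF_cons 0 (0 :: u)
  rwa [filter_zero] at h

private lemma AF_cons_zero (w : List ℕ) : AF ((0 : ℕ) :: w) = AF w := by
  ext v
  simp only [AF, Finset.mem_filter, mem_SubF]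
  constructor
  · rintro ⟨h1, h2⟩
    rcases List.sublist_cons_iff.mp h1 with h | ⟨r, rfl, hr⟩
    · exact ⟨h, h2⟩
    · simp at h2
  · rintro ⟨h1, h2⟩
    exact ⟨h1.trans (List.sublist_cons_self 0 w), h2⟩

private lemma AF_cons (x : ℕ) (hx : x ≠ 0) (w : List ℕ) :
    AF (x :: w) = AF w ∪ (SubF w).image (x :: ·) := by
  ext v
  simp only [AF, Finset.mem_filter, mem_SubF, Finset.mem_union, Finset.mem_image]
  constructor
  · rintro ⟨h1, h2⟩
    rcases List.sublist_cons_iff.mp h1 with h | ⟨r, rfl, hr⟩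
    · exact Or.inl ⟨h, h2⟩
    · exact Or.inr ⟨r, hr, rfl⟩
  · rintro (⟨h1, h2⟩ | ⟨s, hs, rfl⟩)
    · exact ⟨h1.trans (List.sublist_cons_self x w), h2⟩
    · refine ⟨List.cons_sublist_cons.mpr (hs), by simp [hx]⟩

private lemma AF_inter (x : ℕ) (hx : x ≠ 0) (w : List ℕ) :
    AF w ∩ (SubF w).image (x :: ·) =
      ((SubF w).filter (fun s => (x :: s).Sublist w)).image (x :: ·) := by
  ext v
  simp only [AF, Finset.mem_inter, Finset.mem_filter, Finset.mem_image, mem_SubF]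
  constructor
  · rintro ⟨⟨h1, -⟩, s, hs, rfl⟩
    exact ⟨s, ⟨hs, h1⟩, rfl⟩
  · rintro ⟨s, ⟨hs, h1⟩, rfl⟩
    exact ⟨⟨h1, by simp [hx]⟩, s, hs, rfl⟩

private lemma lbCount_cons_key (x : ℕ) (hx : x ≠ 0) (w : List ℕ) :
    lbCount (x :: w) + ((SubF w).filter (fun s => (x :: s).Sublist w)).card
      = (AF w).card + (SubF w).card := by
  have h := Finset.card_union_add_card_inter (AF w) ((SubF w).image (x :: ·))
  rw [← AF_cons x hx, AF_inter x hx,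
    Finset.card_image_of_injective _ (List.cons_injective),
    Finset.card_image_of_injective _ (List.cons_injective)] at h
  rw [lbCount_eq]
  exact h

/-- The filter set is invariant under prepending a zero. -/
private lemma filter_cons_zero (x : ℕ) (hx : x ≠ 0) (w : List ℕ) :
    (SubF ((0 : ℕ) :: w)).filter (fun s => (x :: s).Sublist (0 :: w))
      = (SubF w).filter (fun s => (x :: s).Sublist w) := by
  ext s
  simp only [Finset.mem_filter, mem_SubF]
  constructor
  · rintro ⟨h1, h2⟩
    rcases List.sublist_cons_iff.mp h2 with h | ⟨r, hr, -⟩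
    · exact ⟨(List.sublist_cons_self x s).trans h, h⟩
    · exact absurd (List.head_eq_of_cons_eq hr) hx
  · rintro ⟨h1, h2⟩
    exact ⟨h1.trans (List.sublist_cons_self 0 w), h2.trans (List.sublist_cons_self 0 w)⟩

end Aux

theorem stmt0 (b x : ℕ) (hb : 2 ≤ b) (hx : 1 ≤ x) (hxb : x < b)
    (u : List ℕ) (hu : ∀ d ∈ u, d < b) :
    (lbCount (x :: 0 :: 0 :: u) : ℤ) =
      2 * lbCount (x :: 0 :: u) - lbCount (x :: u) := by
  have hx0 : x ≠ 0 := by omega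
  have e0 := lbCount_cons_key x hx0 u
  have e1 := lbCount_cons_key x hx0 (0 :: u)
  have e2 := lbCount_cons_key x hx0 (0 :: 0 :: u)
  rw [filter_cons_zero x hx0, AF_cons_zero] at e1
  rw [filter_cons_zero x hx0, AF_cons_zero, filter_cons_zero x hx0, AF_cons_zero] at e2
  have e3 := card_SubF_key u
  omega
end

section
/- For any base b ≥ 2, any letters x, y ∈ {1,...,b-1}, and any word u over {0,...,b-1}, the number of words in L_b occurring as scattered subwords of x0yu equals the number of words in L_b occurring as scattered subwords of xyu plus the number of words in L_b occurring as scattered subwords of yu. -/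
namespace LbAux
open Finset

def SS (w : List ℕ) : Finset (List ℕ) := w.sublists.toFinset

lemma mem_SS {v w : List ℕ} : v ∈ SS w ↔ v.Sublist w := by
  simp [SS, List.mem_sublists]

def FS (w : List ℕ) : Finset (List ℕ) := (SS w).filter (fun v => v.head? ≠ some 0)

lemma mem_FS {v w : List ℕ} : v ∈ FS w ↔ v.Sublist w ∧ v.head? ≠ some 0 := by
  simp [FS, mem_SS]

lemma lbCount_eq (w : List ℕ) : lbCount w = (FS w).card := by
  rw [lbCount, ← List.card_toFinset, List.toFinset_filter]
  congr 1
  simp [FS, SS]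

lemma cons_inj (a : ℕ) : Function.Injective (a :: · : List ℕ → List ℕ) := by
  intro s t h; simpa using h

lemma SS_cons (a : ℕ) (w : List ℕ) :
    SS (a :: w) = SS w ∪ (SS w).image (a :: ·) := by
  ext v
  simp only [mem_SS, mem_union, mem_image, List.sublist_cons_iff]
  constructor
  · rintro (h | ⟨r, rfl, hr⟩)
    · exact Or.inl h
    · exact Or.inr ⟨r, hr, rfl⟩
  · rintro (h | ⟨r, hr, rfl⟩)
    · exact Or.inl h
    · exact Or.inr ⟨r, rfl, hr⟩

lemma FS_cons_zero (w : List ℕ) : FS (0 :: w) = FS w := by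
  ext v
  simp only [mem_FS, List.sublist_cons_iff]
  constructor
  · rintro ⟨h | ⟨r, rfl, hr⟩, hv⟩
    · exact ⟨h, hv⟩
    · simp at hv
  · rintro ⟨h, hv⟩; exact ⟨Or.inl h, hv⟩

lemma FS_cons {x : ℕ} (hx : x ≠ 0) (w : List ℕ) :
    FS (x :: w) = FS w ∪ (SS w).image (x :: ·) := by
  ext v
  simp only [mem_FS, mem_union, mem_image, mem_SS, List.sublist_cons_iff]
  constructor
  · rintro ⟨h | ⟨r, rfl, hr⟩, hv⟩
    · exact Or.inl ⟨h, hv⟩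
    · exact Or.inr ⟨r, hr, rfl⟩
  · rintro (⟨h, hv⟩ | ⟨r, hr, rfl⟩)
    · exact ⟨Or.inl h, hv⟩
    · exact ⟨Or.inr ⟨r, rfl, hr⟩, by simp [hx]⟩

lemma card_SS_cons_zero (w : List ℕ) :
    (SS (0 :: w)).card = (SS w).card + (FS w).card := by
  have h1 := Finset.card_union_add_card_inter (SS w) ((SS w).image (0 :: ·))
  have h2 : ((SS w).image (0 :: ·)).card = (SS w).card :=
    Finset.card_image_of_injective _ (cons_inj 0)
  have h3 : SS w ∩ (SS w).image (0 :: ·)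
      = (SS w).filter (fun v => ¬ v.head? ≠ some 0) := by
    ext v
    simp only [mem_inter, mem_image, mem_SS, mem_filter, not_not]
    constructor
    · rintro ⟨hv, r, hr, rfl⟩; exact ⟨hv, rfl⟩
    · rintro ⟨hv, hh⟩
      exact ⟨hv, v.tail, (List.tail_sublist v).trans hv,
        (List.eq_cons_of_mem_head? hh).symm⟩
  have h4 := Finset.card_filter_add_card_filter_not
    (s := SS w) (p := fun v => v.head? ≠ some 0)
  have h5 : (FS w).card = ((SS w).filter (fun v => v.head? ≠ some 0)).card := rfl
  rw [← h3] at h4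
  rw [SS_cons]
  omega

lemma inter_eq {x : ℕ} (w : List ℕ) :
    FS w ∩ (SS (0 :: w)).image (x :: ·) = FS w ∩ (SS w).image (x :: ·) := by
  ext v
  simp only [mem_inter, mem_image, mem_SS, mem_FS]
  constructor
  · rintro ⟨⟨hv, hh⟩, r, _, rfl⟩
    exact ⟨⟨hv, hh⟩, r, ((List.sublist_cons_self x r).trans hv), rfl⟩
  · rintro ⟨hf, r, hr, rfl⟩
    exact ⟨hf, r, hr.trans (List.sublist_cons_self 0 w), rfl⟩

lemma key {x : ℕ} (hx : x ≠ 0) (w : List ℕ) :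
    (FS (x :: 0 :: w)).card = (FS (x :: w)).card + (FS w).card := by
  have e1 : FS (x :: 0 :: w) = FS w ∪ (SS (0 :: w)).image (x :: ·) := by
    rw [FS_cons hx, FS_cons_zero]
  have e2 : FS (x :: w) = FS w ∪ (SS w).image (x :: ·) := FS_cons hx w
  have h1 := Finset.card_union_add_card_inter (FS w) ((SS (0 :: w)).image (x :: ·))
  have h2 := Finset.card_union_add_card_inter (FS w) ((SS w).image (x :: ·))
  have h3 : ((SS (0 :: w)).image (x :: ·)).card = (SS (0 :: w)).card :=
    Finset.card_image_of_injective _ (cons_inj x)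
  have h4 : ((SS w).image (x :: ·)).card = (SS w).card :=
    Finset.card_image_of_injective _ (cons_inj x)
  have h5 := card_SS_cons_zero w
  have h6 := inter_eq (x := x) w
  rw [h6] at h1
  rw [e1, e2]
  omega

end LbAux

theorem stmt2 (b x y : ℕ) (hb : 2 ≤ b) (hx : 1 ≤ x) (hxb : x < b)
    (hy : 1 ≤ y) (hyb : y < b) (u : List ℕ) (hu : ∀ d ∈ u, d < b) :
    lbCount (x :: 0 :: y :: u) =
      lbCount (x :: y :: u) + lbCount (y :: u) := by
  rw [LbAux.lbCount_eq, LbAux.lbCount_eq, LbAux.lbCount_eq]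
  exact LbAux.key (by omega) (y :: u)
end

section
/- For any base b ≥ 2, any distinct letters x, y ∈ {1,...,b-1}, any letter z ∈ {0,...,b-1}, and any word u over {0,...,b-1}, the number of words in L_b occurring as scattered subwords of xyzu equals the number of such subwords of xzu, plus twice the number of such subwords of yzu, minus twice the number of such subwords of zu. -/
/-- The finset of distinct scattered subwords of `u`. -/
def SFin (u : List ℕ) : Finset (List ℕ) := u.sublists.toFinset

lemma mem_SFin {v u : List ℕ} : v ∈ SFin u ↔ v.Sublist u := by
  simp [SFin, List.mem_sublists]

lemma lbCount_eq_s4 (u : List ℕ) :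
    lbCount u = ((SFin u).filter (fun v => v.head? ≠ some 0)).card := by
  rw [lbCount, SFin, ← List.card_toFinset, List.toFinset_filter]
  congr 1
  apply Finset.filter_congr
  intro v _
  simp

lemma SFin_cons (a : ℕ) (u : List ℕ) :
    SFin (a :: u) = SFin u ∪ (SFin u).image (a :: ·) := by
  ext v
  simp only [mem_SFin, Finset.mem_union, Finset.mem_image, List.sublist_cons_iff]
  constructor
  · rintro (h | ⟨r, rfl, hr⟩)
    · exact Or.inl h
    · exact Or.inr ⟨r, hr, rfl⟩
  · rintro (h | ⟨r, hr, rfl⟩)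
    · exact Or.inl h
    · exact Or.inr ⟨r, rfl, hr⟩

lemma tail_mem_SFin {v u : List ℕ} (h : v ∈ SFin u) : v.tail ∈ SFin u :=
  mem_SFin.2 ((List.tail_sublist v).trans (mem_SFin.1 h))

lemma inter_image (a : ℕ) (u : List ℕ) (A : Finset (List ℕ)) (hA : A ⊆ SFin u)
    (hhead : ∀ v ∈ SFin u, v.head? = some a → v ∈ A) :
    A ∩ (SFin u).image (a :: ·) = (SFin u).filter (fun v => v.head? = some a) := by
  ext v
  simp only [Finset.mem_inter, Finset.mem_image, Finset.mem_filter]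
  constructor
  · rintro ⟨hv, r, hr, rfl⟩
    exact ⟨hA hv, rfl⟩
  · rintro ⟨hv, hh⟩
    have hvne : v ≠ [] := by rintro rfl; simp at hh
    have hv' : v = a :: v.tail := by
      cases v with
      | nil => simp at hh
      | cons b t => simp_all
    refine ⟨hhead v hv hh, v.tail, tail_mem_SFin hv, hv'.symm⟩

lemma card_SFin_cons (a : ℕ) (u : List ℕ) :
    (SFin (a :: u)).card + ((SFin u).filter (fun v => v.head? = some a)).card
      = 2 * (SFin u).card := by
  rw [SFin_cons]
  have hinj : Set.InjOn (a :: ·) (SFin u) := fun p _ q _ h => by simpa using h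
  have himg : ((SFin u).image (a :: ·)).card = (SFin u).card :=
    Finset.card_image_of_injOn hinj
  have := Finset.card_union_add_card_inter (SFin u) ((SFin u).image (a :: ·))
  rw [inter_image a u (SFin u) (le_refl _) (fun v hv _ => hv)] at this
  omega

lemma card_filter_cons (a : ℕ) (ha : a ≠ 0) (u : List ℕ) :
    ((SFin (a :: u)).filter (fun v => v.head? ≠ some 0)).card
      + ((SFin u).filter (fun v => v.head? = some a)).card
      = ((SFin u).filter (fun v => v.head? ≠ some 0)).card + (SFin u).card := by
  rw [SFin_cons, Finset.filter_union]
  have himgfilter :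
      ((SFin u).image (a :: ·)).filter (fun v => v.head? ≠ some 0)
        = (SFin u).image (a :: ·) := by
    apply Finset.filter_true_of_mem
    rintro v hv
    simp only [Finset.mem_image] at hv
    obtain ⟨r, _, rfl⟩ := hv
    simpa using ha
  rw [himgfilter]
  have hinj : Set.InjOn (a :: ·) (SFin u) := fun p _ q _ h => by simpa using h
  have himg : ((SFin u).image (a :: ·)).card = (SFin u).card :=
    Finset.card_image_of_injOn hinj
  have hsub : (SFin u).filter (fun v => v.head? ≠ some 0) ⊆ SFin u :=
    Finset.filter_subset _ _
  have hhead : ∀ v ∈ SFin u, v.head? = some a →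
      v ∈ (SFin u).filter (fun v => v.head? ≠ some 0) := by
    intro v hv hh
    refine Finset.mem_filter.2 ⟨hv, ?_⟩
    rw [hh]
    simpa using ha
  have := Finset.card_union_add_card_inter
    ((SFin u).filter (fun v => v.head? ≠ some 0)) ((SFin u).image (a :: ·))
  rw [inter_image a u _ hsub hhead] at this
  omega

lemma head_filter_cons (a c : ℕ) (hac : a ≠ c) (u : List ℕ) :
    (SFin (c :: u)).filter (fun v => v.head? = some a)
      = (SFin u).filter (fun v => v.head? = some a) := by
  ext v
  simp only [Finset.mem_filter, mem_SFin, List.sublist_cons_iff]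
  constructor
  · rintro ⟨h | ⟨r, rfl, hr⟩, hh⟩
    · exact ⟨h, hh⟩
    · simp at hh; omega
  · rintro ⟨h, hh⟩
    exact ⟨Or.inl h, hh⟩

theorem stmt4 (b x y z : ℕ) (hb : 2 ≤ b) (hx : 1 ≤ x) (hxb : x < b)
    (hy : 1 ≤ y) (hyb : y < b) (hxy : x ≠ y) (hz : z < b)
    (u : List ℕ) (hu : ∀ d ∈ u, d < b) :
    (lbCount (x :: y :: z :: u) : ℤ) =
      lbCount (x :: z :: u) + 2 * lbCount (y :: z :: u) - 2 * lbCount (z :: u) := by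
  have hx0 : x ≠ 0 := by omega
  have hy0 : y ≠ 0 := by omega
  set w := z :: u with hw
  -- abbreviations
  have h1 := card_filter_cons x hx0 (y :: w)
  have h2 := card_filter_cons y hy0 w
  have h3 := card_filter_cons x hx0 w
  have h4 := card_SFin_cons y w
  have h5 : (SFin (y :: w)).filter (fun v => v.head? = some x)
      = (SFin w).filter (fun v => v.head? = some x) := head_filter_cons x y hxy w
  rw [h5] at h1
  simp only [lbCount_eq_s4]
  push_cast
  omega
end

section
/- For all b ≥ 2, all x ∈ {1,...,b-1}, all ℓ ≥ 1, and all r with 0 ≤ r < b^{ℓ-1}, one has S_b(x·b^ℓ + x·b^{ℓ-1} + r) = 2·S_b(x·b^{ℓ-1} + r) − S_b(r). -/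
namespace StmtAux

def Dall (u : List ℕ) : Finset (List ℕ) := u.sublists.toFinset

def Dnz (u : List ℕ) : Finset (List ℕ) := (Dall u).filter (fun v => v.head? ≠ some 0)

lemma mem_Dall {u v : List ℕ} : v ∈ Dall u ↔ v.Sublist u := by
  simp [Dall, List.mem_sublists]

lemma lbCount_eq (u : List ℕ) : lbCount u = (Dnz u).card := by
  rw [lbCount, Dnz, Dall, ← List.card_toFinset, List.toFinset_filter]
  congr
  funext v
  simp

lemma Dall_cons (a : ℕ) (u : List ℕ) : Dall (a :: u) = Dall u ∪ (Dall u).image (a :: ·) := by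
  ext v
  simp only [mem_Dall, List.sublist_cons_iff, Finset.mem_union, Finset.mem_image]
  constructor
  · rintro (h | ⟨t, rfl, ht⟩)
    · exact Or.inl h
    · exact Or.inr ⟨t, ht, rfl⟩
  · rintro (h | ⟨t, ht, rfl⟩)
    · exact Or.inl h
    · exact Or.inr ⟨t, rfl, ht⟩

lemma card_image_cons (a : ℕ) (s : Finset (List ℕ)) :
    (s.image (a :: ·)).card = s.card :=
  Finset.card_image_of_injective _ (fun _ _ h => by injection h)

lemma Dnz_cons_of_ne {a : ℕ} (ha : a ≠ 0) (u : List ℕ) :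
    Dnz (a :: u) = Dnz u ∪ (Dall u).image (a :: ·) := by
  ext v
  simp only [Dnz, Dall_cons, Finset.mem_filter, Finset.mem_union, Finset.mem_image]
  constructor
  · rintro ⟨h | ⟨t, ht, rfl⟩, hP⟩
    · exact Or.inl ⟨h, hP⟩
    · exact Or.inr ⟨t, ht, rfl⟩
  · rintro (⟨h, hP⟩ | ⟨t, ht, rfl⟩)
    · exact ⟨Or.inl h, hP⟩
    · exact ⟨Or.inr ⟨t, ht, rfl⟩, by simp [ha]⟩

lemma inter_Dall (a : ℕ) (u : List ℕ) :
    Dall u ∩ (Dall u).image (a :: ·) =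
      ((Dall u).filter (fun v => a :: v ∈ Dall u)).image (a :: ·) := by
  ext v
  simp only [Finset.mem_inter, Finset.mem_image, Finset.mem_filter]
  constructor
  · rintro ⟨hv, t, ht, rfl⟩
    exact ⟨t, ⟨ht, hv⟩, rfl⟩
  · rintro ⟨t, ⟨ht, hat⟩, rfl⟩
    exact ⟨hat, t, ht, rfl⟩

lemma inter_Dnz {a : ℕ} (ha : a ≠ 0) (u : List ℕ) :
    Dnz u ∩ (Dall u).image (a :: ·) = Dall u ∩ (Dall u).image (a :: ·) := by
  ext v
  simp only [Dnz, Finset.mem_inter, Finset.mem_filter, Finset.mem_image]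
  constructor
  · rintro ⟨⟨hv, _⟩, h⟩; exact ⟨hv, h⟩
  · rintro ⟨hv, t, ht, rfl⟩
    exact ⟨⟨hv, by simp [ha]⟩, t, ht, rfl⟩

lemma inter_Dnz2 {a : ℕ} (ha : a ≠ 0) (u : List ℕ) :
    Dnz (a :: u) ∩ (Dall (a :: u)).image (a :: ·) = (Dall u).image (a :: ·) := by
  ext v
  simp only [Dnz, Finset.mem_inter, Finset.mem_filter, Finset.mem_image]
  constructor
  · rintro ⟨⟨hv, _⟩, t, ht, rfl⟩
    refine ⟨t, ?_, rfl⟩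
    rw [mem_Dall] at hv ⊢
    exact (List.cons_sublist_cons).mp hv
  · rintro ⟨t, ht, rfl⟩
    have h1 : a :: t ∈ Dall (a :: u) := by
      rw [mem_Dall]; exact (List.cons_sublist_cons).mpr (mem_Dall.mp ht)
    have h2 : t ∈ Dall (a :: u) := by
      rw [mem_Dall]; exact (mem_Dall.mp ht).trans (List.sublist_cons_self a u)
    exact ⟨⟨h1, by simp [ha]⟩, t, h2, rfl⟩

lemma key_counts {x : ℕ} (hx : x ≠ 0) (u : List ℕ) :
    (Dnz (x :: x :: u)).card + (Dnz u).card = 2 * (Dnz (x :: u)).card := by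
  set T : ℕ := ((Dall u).filter (fun v => x :: v ∈ Dall u)).card with hT
  have E1 : (Dall (x :: u)).card + T = 2 * (Dall u).card := by
    have := Finset.card_union_add_card_inter (Dall u) ((Dall u).image (x :: ·))
    rw [← Dall_cons, inter_Dall, card_image_cons, card_image_cons] at this
    omega
  have E2 : (Dnz (x :: u)).card + T = (Dnz u).card + (Dall u).card := by
    have := Finset.card_union_add_card_inter (Dnz u) ((Dall u).image (x :: ·))
    rw [← Dnz_cons_of_ne hx, inter_Dnz hx, inter_Dall, card_image_cons, card_image_cons] at this
    omega
  have E3 : (Dnz (x :: x :: u)).card + (Dall u).card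
      = (Dnz (x :: u)).card + (Dall (x :: u)).card := by
    have := Finset.card_union_add_card_inter (Dnz (x :: u)) ((Dall (x :: u)).image (x :: ·))
    rw [← Dnz_cons_of_ne hx, inter_Dnz2 hx, card_image_cons, card_image_cons] at this
    omega
  omega

lemma Dnz_zero_cons (u : List ℕ) : Dnz (0 :: u) = Dnz u := by
  ext v
  simp only [Dnz, Dall_cons, Finset.mem_filter, Finset.mem_union, Finset.mem_image]
  constructor
  · rintro ⟨h | ⟨t, ht, rfl⟩, hP⟩
    · exact ⟨h, hP⟩
    · simp at hP
  · rintro ⟨h, hP⟩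
    exact ⟨Or.inl h, hP⟩

lemma lbCount_replicate (k : ℕ) (u : List ℕ) :
    lbCount (List.replicate k 0 ++ u) = lbCount u := by
  induction k with
  | zero => simp
  | succ k ih =>
    rw [List.replicate_succ, List.cons_append, lbCount_eq, Dnz_zero_cons, ← lbCount_eq, ih]

lemma lb_key {x : ℕ} (hx : x ≠ 0) (u : List ℕ) :
    lbCount (x :: x :: u) + lbCount u = 2 * lbCount (x :: u) := by
  rw [lbCount_eq, lbCount_eq, lbCount_eq]
  exact key_counts hx u

end StmtAux

open StmtAux in
theorem stmt6 (b x ℓ r : ℕ) (hb : 2 ≤ b) (hx : 1 ≤ x) (hxb : x < b)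
    (hℓ : 1 ≤ ℓ) (hr : r < b ^ (ℓ - 1)) :
    (Sb b (x * b ^ ℓ + x * b ^ (ℓ - 1) + r) : ℤ) =
      2 * Sb b (x * b ^ (ℓ - 1) + r) - Sb b r := by
  have hb1 : 1 < b := hb
  set k := ℓ - 1 with hk
  have hℓk : ℓ = k + 1 := by omega
  set len := (Nat.digits b r).length with hlen
  have hlenk : len ≤ k := by
    rcases Nat.eq_zero_or_pos r with rfl | hr0
    · simp [hlen]
    · rw [hlen, Nat.digits_len b r hb1 (by omega)]
      have := (Nat.log_lt_iff_lt_pow hb1 (by omega : r ≠ 0)).mpr hr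
      omega
  have hxd : Nat.digits b x = [x] := by
    rw [Nat.digits_def' hb1 (by omega : 0 < x), Nat.mod_eq_of_lt hxb,
      Nat.div_eq_of_lt hxb, Nat.digits_zero]
  have h1 : Nat.digits b (x * b ^ k + r)
      = Nat.digits b r ++ List.replicate (k - len) 0 ++ [x] := by
    have := Nat.digits_append_zeroes_append_digits (b := b) (k := k - len) (m := x) (n := r)
      hb1 (by omega)
    rw [hxd] at this
    rw [this, ← hlen]
    congr 1
    have : len + (k - len) = k := by omega
    rw [this]
    ring
  have h2 : (Nat.digits b (x * b ^ k + r)).length = k + 1 := by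
    rw [h1]
    simp [← hlen]
    omega
  have h3 : Nat.digits b (x * b ^ ℓ + x * b ^ k + r)
      = Nat.digits b (x * b ^ k + r) ++ [x] := by
    have := Nat.digits_append_zeroes_append_digits (b := b) (k := 0) (m := x)
      (n := x * b ^ k + r) hb1 (by omega)
    rw [hxd, h2] at this
    simp only [List.replicate_zero, List.append_nil] at this
    rw [this]
    congr 1
    rw [hℓk]
    ring
  set w : List ℕ := List.replicate (k - len) 0 ++ (Nat.digits b r).reverse with hw
  have hs : Sb b (x * b ^ k + r) = lbCount (x :: w) := by
    rw [Sb, h1, hw]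
    simp [List.reverse_append]
  have hs2 : Sb b (x * b ^ ℓ + x * b ^ k + r) = lbCount (x :: x :: w) := by
    rw [Sb, h3, h1, hw]
    simp [List.reverse_append]
  have hsr : Sb b r = lbCount w := by
    rw [Sb, hw, lbCount_replicate]
  have key := lb_key (by omega : x ≠ 0) w
  rw [hs2, hs, hsr]
  omega
end

section
/- For every b ≥ 2 and every n ≥ 0, S_b(b·n + b − 1) = (2b − 1)·S_b(n) − Σ_{s=0}^{b-2} S_b(b·n + s). -/
open List Finset

/-- The finset of `L_b`-subwords of `u`. -/
def Fset (u : List ℕ) : Finset (List ℕ) :=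
  (u.sublists.filter (fun v => v.head? ≠ some 0)).toFinset

lemma lbCount_eq_card (u : List ℕ) : lbCount u = (Fset u).card := by
  rw [Fset, List.card_toFinset]; rfl

lemma mem_Fset {u x : List ℕ} : x ∈ Fset u ↔ x <+ u ∧ x.head? ≠ some 0 := by
  simp [Fset, List.mem_filter]

lemma nil_mem_Fset (u : List ℕ) : [] ∈ Fset u := by
  simp [mem_Fset]

/-- `A s w`: the words of `Fset w` to which `s` may be appended. -/
def Aset (s : ℕ) (w : List ℕ) : Finset (List ℕ) :=
  if s = 0 then (Fset w).erase [] else Fset w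

/-- `E s w`: nonempty words of `Fset w` ending in `s`. -/
def Eset (s : ℕ) (w : List ℕ) : Finset (List ℕ) :=
  (Fset w).filter (fun x => x.getLast? = some s)

lemma mem_Aset {s : ℕ} {w v : List ℕ} :
    v ∈ Aset s w ↔ v ∈ Fset w ∧ (s = 0 → v ≠ []) := by
  unfold Aset
  by_cases hs : s = 0 <;> simp [hs, Finset.mem_erase, and_comm]

lemma Fset_concat (w : List ℕ) (s : ℕ) :
    Fset (w ++ [s]) = Fset w ∪ (Aset s w).image (· ++ [s]) := by
  ext x
  simp only [Finset.mem_union, Finset.mem_image, mem_Fset, mem_Aset]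
  constructor
  · rintro ⟨hsub, hhead⟩
    rw [List.sublist_append_iff] at hsub
    obtain ⟨l₁, l₂, rfl, h₁, h₂⟩ := hsub
    rcases List.sublist_singleton.mp h₂ with rfl | rfl
    · exact Or.inl ⟨by simpa using h₁, by simpa using hhead⟩
    · right
      refine ⟨l₁, ⟨⟨h₁, ?_⟩, ?_⟩, rfl⟩
      · cases l₁ with
        | nil => simp
        | cons a t => simpa using hhead
      · rintro rfl rfl
        simp at hhead
  · rintro (⟨hsub, hhead⟩ | ⟨v, ⟨⟨hsub, hhead⟩, hv⟩, rfl⟩)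
    · exact ⟨hsub.trans (List.sublist_append_left _ _), hhead⟩
    · refine ⟨hsub.append (List.Sublist.refl _), ?_⟩
      cases v with
      | nil =>
        intro h
        simp only [List.nil_append, List.head?_cons, Option.some.injEq] at h
        exact hv (h ▸ rfl) rfl
      | cons a t => simpa using hhead

lemma inter_eq_Eset (w : List ℕ) (s : ℕ) :
    Fset w ∩ (Aset s w).image (· ++ [s]) = Eset s w := by
  ext x
  simp only [Finset.mem_inter, Finset.mem_image, Eset, Finset.mem_filter]
  constructor
  · rintro ⟨hx, v, hv, rfl⟩
    exact ⟨hx, List.getLast?_concat⟩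
  · rintro ⟨hx, hlast⟩
    refine ⟨hx, x.dropLast, ?_, List.dropLast_append_getLast? _ hlast⟩
    have hxne : x ≠ [] := by rintro rfl; simp at hlast
    have hxd : x.dropLast ++ [s] = x := List.dropLast_append_getLast? _ hlast
    rw [mem_Fset] at hx
    rw [mem_Aset, mem_Fset]
    refine ⟨⟨(List.dropLast_sublist x).trans hx.1, ?_⟩, ?_⟩
    · cases hd : x.dropLast with
      | nil => simp
      | cons a t =>
        have : x.head? = some a := by rw [← hxd, hd]; simp
        rw [hd] at *
        simp only [List.head?_cons]
        intro h
        exact hx.2 (by rw [this, h])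
    · rintro rfl h
      apply hx.2
      rw [← hxd, h]
      simp

lemma card_Aset (w : List ℕ) (s : ℕ) :
    ((Aset s w).card : ℤ) = (Fset w).card - (if s = 0 then 1 else 0) := by
  unfold Aset
  by_cases hs : s = 0
  · simp [hs, Finset.card_erase_of_mem (nil_mem_Fset w),
      Nat.cast_sub (Nat.one_le_iff_ne_zero.mpr (Finset.card_ne_zero_of_mem (nil_mem_Fset w)))]
  · simp [hs]

lemma card_concat (w : List ℕ) (s : ℕ) :
    ((Fset (w ++ [s])).card : ℤ) =
      (Fset w).card + (Aset s w).card - (Eset s w).card := by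
  have hinj : Function.Injective (· ++ [s] : List ℕ → List ℕ) :=
    List.append_left_injective [s]
  have h := Finset.card_union_add_card_inter (Fset w) ((Aset s w).image (· ++ [s]))
  rw [← Fset_concat, inter_eq_Eset, Finset.card_image_of_injective _ hinj] at h
  have := congrArg (fun k : ℕ => (k : ℤ)) h
  push_cast at this
  linarith

lemma sum_card_Eset {b : ℕ} (hb : 2 ≤ b) (w : List ℕ) (hw : ∀ d ∈ w, d < b) :
    ∑ s ∈ Finset.range b, (Eset s w).card = (Fset w).card - 1 := by
  have hdisj : ∀ x ∈ Finset.range b, ∀ y ∈ Finset.range b, x ≠ y →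
      Disjoint (Eset x w) (Eset y w) := by
    intro x _ y _ hxy
    rw [Finset.disjoint_left]
    intro a hax hay
    simp only [Eset, Finset.mem_filter] at hax hay
    exact hxy (by rw [hax.2] at hay; exact_mod_cast Option.some.inj hay.2)
  have hunion : (Finset.range b).biUnion (fun s => Eset s w) = (Fset w).erase [] := by
    ext x
    simp only [Finset.mem_biUnion, Finset.mem_range, Eset, Finset.mem_filter,
      Finset.mem_erase]
    constructor
    · rintro ⟨s, _, hx, hlast⟩
      exact ⟨by rintro rfl; simp at hlast, hx⟩
    · rintro ⟨hne, hx⟩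
      have ha := List.getLast?_eq_getLast hne
      have hmem : x.getLast hne ∈ x := List.getLast_mem hne
      exact ⟨x.getLast hne, hw _ ((mem_Fset.mp hx).1.subset hmem), hx, ha⟩
  rw [← Finset.card_biUnion hdisj, hunion,
    Finset.card_erase_of_mem (nil_mem_Fset w)]

lemma sum_Fset_concat {b : ℕ} (hb : 2 ≤ b) (w : List ℕ) (hw : ∀ d ∈ w, d < b) :
    ∑ s ∈ Finset.range b, ((Fset (w ++ [s])).card : ℤ) =
      (2 * b - 1) * (Fset w).card := by
  have hA : ∑ s ∈ Finset.range b, ((Aset s w).card : ℤ)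
      = b * (Fset w).card - 1 := by
    have : ∑ s ∈ Finset.range b, ((Aset s w).card : ℤ)
        = ∑ s ∈ Finset.range b, (((Fset w).card : ℤ) - (if s = 0 then 1 else 0)) := by
      exact Finset.sum_congr rfl (fun s _ => card_Aset w s)
    rw [this, Finset.sum_sub_distrib, Finset.sum_const, Finset.card_range,
      Finset.sum_ite_eq' (Finset.range b) 0 (fun _ => (1 : ℤ))]
    have h0 : (0 : ℕ) ∈ Finset.range b := Finset.mem_range.mpr (by omega)
    simp only [h0, if_true, nsmul_eq_mul]
  have hE : ∑ s ∈ Finset.range b, ((Eset s w).card : ℤ)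
      = (Fset w).card - 1 := by
    have h := sum_card_Eset hb w hw
    have h1 : 1 ≤ (Fset w).card := Finset.card_pos.mpr ⟨[], nil_mem_Fset w⟩
    rw [← Nat.cast_sum, h, Nat.cast_sub h1, Nat.cast_one]
  calc ∑ s ∈ Finset.range b, ((Fset (w ++ [s])).card : ℤ)
      = ∑ s ∈ Finset.range b,
        (((Fset w).card : ℤ) + (Aset s w).card - (Eset s w).card) :=
        Finset.sum_congr rfl (fun s _ => card_concat w s)
    _ = b * (Fset w).card + (b * (Fset w).card - 1) - ((Fset w).card - 1) := by
        rw [Finset.sum_sub_distrib, Finset.sum_add_distrib, hA, hE,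
          Finset.sum_const, Finset.card_range]
        push_cast; ring
    _ = (2 * b - 1) * (Fset w).card := by ring

lemma Sb_eq_concat {b : ℕ} (hb : 2 ≤ b) (n s : ℕ) (hs : s < b) :
    Sb b (b * n + s) = (Fset ((Nat.digits b n).reverse ++ [s])).card := by
  by_cases h : b * n + s = 0
  · have hn : n = 0 := by nlinarith
    have hs0 : s = 0 := by omega
    subst hn hs0
    rw [h]
    have : Sb b 0 = 1 := by simp [Sb, lbCount]
    rw [this]
    have : (Nat.digits b 0).reverse ++ [0] = [0] := by simp
    rw [this]
    have : Fset [0] = {[]} := by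
      ext x
      simp only [mem_Fset, List.sublist_singleton, Finset.mem_singleton]
      constructor
      · rintro ⟨rfl | rfl, h2⟩
        · rfl
        · simp at h2
      · rintro rfl; simp
    simp [this]
  · have hdig : Nat.digits b (b * n + s) = s :: Nat.digits b n := by
      rw [Nat.digits_def' (by omega : 1 < b) (Nat.pos_of_ne_zero h),
        Nat.mul_add_mod, Nat.mod_eq_of_lt hs, Nat.mul_add_div (by omega),
        Nat.div_eq_of_lt hs, Nat.add_zero]
    rw [Sb, hdig, lbCount_eq_card, List.reverse_cons]

theorem stmt8 (b n : ℕ) (hb : 2 ≤ b) :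
    (Sb b (b * n + b - 1) : ℤ) =
      (2 * b - 1) * Sb b n - ∑ s ∈ Finset.range (b - 1), (Sb b (b * n + s) : ℤ) := by
  set w := (Nat.digits b n).reverse with hw
  have hwd : ∀ d ∈ w, d < b := by
    intro d hd
    rw [hw, List.mem_reverse] at hd
    exact Nat.digits_lt_base (by omega) hd
  have hSn : (Sb b n : ℤ) = (Fset w).card := by
    rw [Sb, lbCount_eq_card]
  have hsum : ∑ s ∈ Finset.range b, ((Sb b (b * n + s)) : ℤ)
      = (2 * b - 1) * Sb b n := by
    rw [hSn, ← sum_Fset_concat hb w hwd]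
    exact Finset.sum_congr rfl (fun s hs => by
      rw [Sb_eq_concat hb n s (Finset.mem_range.mp hs)])
  obtain ⟨c, rfl⟩ : ∃ c, b = c + 1 := ⟨b - 1, by omega⟩
  rw [Finset.sum_range_succ] at hsum
  have hb1 : (c + 1) * n + (c + 1) - 1 = (c + 1) * n + c := by omega
  have hc : c + 1 - 1 = c := by omega
  rw [hb1, hc]
  linarith
end

section
/- The sequence (S_b(n))_{n≥0} is b-regular: the ℤ-module generated by its b-kernel is finitely generated, with generating set the b sequences (S_b(n))_{n≥0} and (S_b(bn+s))_{n≥0} for s ∈ {0,...,b-2}. -/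
namespace Stmt11

def Fset (u : List ℕ) : Finset (List ℕ) :=
  (u.sublists.filter (fun v => v.head? ≠ some 0)).toFinset

lemma lbCount_eq (u : List ℕ) : lbCount u = (Fset u).card :=
  (List.card_toFinset _).symm

lemma mem_Fset {v u : List ℕ} : v ∈ Fset u ↔ v.Sublist u ∧ v.head? ≠ some 0 := by
  simp [Fset, List.mem_filter, List.mem_sublists]

lemma nil_mem_Fset (u : List ℕ) : ([] : List ℕ) ∈ Fset u := by
  simp [mem_Fset]

def EE (d : ℕ) (u : List ℕ) : ℕ :=
  ((Fset u).filter (fun v => v.getLast? = some d)).card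

/-- Membership characterization for sublists of `u ++ [e]` ending in `e`. -/
lemma memA {v u : List ℕ} {e : ℕ} :
    (v ∈ Fset (u ++ [e]) ∧ v.getLast? = some e) ↔
      ∃ w, v = w ++ [e] ∧ w ∈ Fset u ∧ (w = [] → e ≠ 0) := by
  constructor
  · rintro ⟨hv, hlast⟩
    obtain ⟨w, rfl⟩ := List.getLast?_eq_some_iff.mp hlast
    obtain ⟨hsub, hhead⟩ := mem_Fset.mp hv
    have hw : w.Sublist u := (List.append_sublist_append_right [e]).mp hsub
    refine ⟨w, rfl, mem_Fset.mpr ⟨hw, ?_⟩, ?_⟩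
    · rcases w with _ | ⟨a, w⟩
      · simp
      · simpa using hhead
    · rintro rfl he
      subst he
      simp at hhead
  · rintro ⟨w, rfl, hw, hne⟩
    obtain ⟨hsub, hhead⟩ := mem_Fset.mp hw
    refine ⟨mem_Fset.mpr ⟨(List.append_sublist_append_right [e]).mpr hsub, ?_⟩,
      List.getLast?_concat⟩
    rcases w with _ | ⟨a, w⟩
    · simpa using hne rfl
    · simpa using hhead

/-- Sublists of `u ++ [e]` not ending in `e` are exactly those of `u` not ending in `e`. -/
lemma memB {v u : List ℕ} {e : ℕ} (hlast : v.getLast? ≠ some e) :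
    v ∈ Fset (u ++ [e]) ↔ v ∈ Fset u := by
  rw [mem_Fset, mem_Fset]
  constructor
  · rintro ⟨hsub, hhead⟩
    refine ⟨?_, hhead⟩
    obtain ⟨l₁, l₂, rfl, h₁, h₂⟩ := List.sublist_append_iff.mp hsub
    rcases List.sublist_singleton.mp h₂ with rfl | rfl
    · simpa using h₁
    · exact absurd List.getLast?_concat hlast
  · rintro ⟨hsub, hhead⟩
    exact ⟨hsub.trans (List.sublist_append_left _ _), hhead⟩

end Stmt11

namespace Stmt11

lemma card_filter_eq_nil (u : List ℕ) :
    ((Fset u).filter (fun w => w = [])).card = 1 := by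
  have : (Fset u).filter (fun w => w = []) = {[]} := by
    ext v
    simp only [Finset.mem_filter, Finset.mem_singleton]
    exact ⟨fun h => h.2, fun h => ⟨h ▸ nil_mem_Fset u, h⟩⟩
  rw [this]; rfl

lemma L2 (u : List ℕ) (e : ℕ) :
    EE e (u ++ [e]) + (if e = 0 then 1 else 0) = lbCount u := by
  have himg : (Fset (u ++ [e])).filter (fun v => v.getLast? = some e) =
      ((Fset u).filter (fun w => w = [] → e ≠ 0)).image (fun w => w ++ [e]) := by
    ext v
    simp only [Finset.mem_filter, Finset.mem_image]
    constructor
    · intro h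
      obtain ⟨w, rfl, hw, hne⟩ := memA.mp h
      exact ⟨w, ⟨hw, hne⟩, rfl⟩
    · rintro ⟨w, ⟨hw, hne⟩, rfl⟩
      exact memA.mpr ⟨w, rfl, hw, hne⟩
  have hcard : EE e (u ++ [e]) = ((Fset u).filter (fun w => w = [] → e ≠ 0)).card := by
    rw [EE, himg, Finset.card_image_of_injective _ (List.append_left_injective [e])]
  by_cases he : e = 0
  · subst he
    have : (Fset u).filter (fun w => w = [] → (0:ℕ) ≠ 0) =
        (Fset u).filter (fun w => ¬ w = []) := by
      apply Finset.filter_congr; intro w _; simp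
    rw [hcard, this, if_pos rfl, lbCount_eq]
    have h2 := Finset.card_filter_add_card_filter_not
      (s := Fset u) (p := fun w => w = [])
    have h3 := card_filter_eq_nil u
    omega
  · have : (Fset u).filter (fun w => w = [] → e ≠ 0) = Fset u := by
      apply Finset.filter_true_of_mem; intro w _; intro _; exact he
    rw [hcard, this, if_neg he, lbCount_eq]; omega

lemma filterB (u : List ℕ) (e : ℕ) :
    (Fset (u ++ [e])).filter (fun v => ¬ v.getLast? = some e) =
      (Fset u).filter (fun v => ¬ v.getLast? = some e) := by
  ext v
  simp only [Finset.mem_filter]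
  constructor
  · rintro ⟨hv, hlast⟩; exact ⟨(memB hlast).mp hv, hlast⟩
  · rintro ⟨hv, hlast⟩; exact ⟨(memB hlast).mpr hv, hlast⟩

lemma L1 (u : List ℕ) (e : ℕ) :
    lbCount (u ++ [e]) + EE e u = EE e (u ++ [e]) + lbCount u := by
  have h1 := Finset.card_filter_add_card_filter_not
    (s := Fset (u ++ [e])) (p := fun v => v.getLast? = some e)
  have h2 := Finset.card_filter_add_card_filter_not
    (s := Fset u) (p := fun v => v.getLast? = some e)
  rw [filterB u e] at h1
  rw [lbCount_eq, lbCount_eq]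
  unfold EE at *
  omega

lemma L3 (u : List ℕ) {d e : ℕ} (hde : d ≠ e) : EE d (u ++ [e]) = EE d u := by
  unfold EE
  congr 1
  ext v
  simp only [Finset.mem_filter]
  constructor
  · rintro ⟨hv, hlast⟩
    refine ⟨(memB ?_).mp hv, hlast⟩
    rw [hlast]; simp [hde]
  · rintro ⟨hv, hlast⟩
    refine ⟨(memB ?_).mpr hv, hlast⟩
    rw [hlast]; simp [hde]

lemma L4 {b : ℕ} (u : List ℕ) (hu : ∀ x ∈ u, x < b) :
    (∑ d ∈ Finset.range b, EE d u) + 1 = lbCount u := by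
  have key : (Fset u).card = ∑ d ∈ Finset.range (b + 1),
      ((Fset u).filter (fun v => v.getLast?.getD b = d)).card := by
    apply Finset.card_eq_sum_card_fiberwise
    intro v hv
    rw [Finset.mem_coe, Finset.mem_range]
    beta_reduce
    rcases hlv : v.getLast? with _ | l
    · simp
    · have hvne : v ≠ [] := by rintro rfl; simp at hlv
      have : l ∈ v := by
        rw [List.getLast?_eq_getLast hvne] at hlv
        exact Option.some_injective _ hlv ▸ List.getLast_mem hvne
      have hlu : l ∈ u := ((mem_Fset.mp hv).1.subset) this
      simp only [Option.getD_some]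
      exact lt_trans (hu l hlu) (Nat.lt_succ_self b)
  rw [Finset.sum_range_succ] at key
  have hfib : ∀ d < b, (Fset u).filter (fun v => v.getLast?.getD b = d) =
      (Fset u).filter (fun v => v.getLast? = some d) := by
    intro d hd
    apply Finset.filter_congr
    intro v _
    rcases v.getLast? with _ | l
    · simp; omega
    · simp
  have hlast : (Fset u).filter (fun v => v.getLast?.getD b = b) = {[]} := by
    ext v
    simp only [Finset.mem_filter, Finset.mem_singleton]
    constructor
    · rintro ⟨hv, hb⟩
      rcases hlv : v.getLast? with _ | l
      · exact List.getLast?_eq_none_iff.mp hlv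
      · have hvne : v ≠ [] := by rintro rfl; simp at hlv
        have : l ∈ v := by
          rw [List.getLast?_eq_getLast hvne] at hlv
          exact Option.some_injective _ hlv ▸ List.getLast_mem hvne
        have hlu : l ∈ u := ((mem_Fset.mp hv).1.subset) this
        rw [hlv] at hb
        simp only [Option.getD_some] at hb
        exact absurd (hb ▸ hu l hlu) (lt_irrefl b)
    · rintro rfl
      exact ⟨nil_mem_Fset u, by simp⟩
  have hsum : ∑ d ∈ Finset.range b,
      ((Fset u).filter (fun v => v.getLast?.getD b = d)).card
      = ∑ d ∈ Finset.range b, EE d u := by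
    apply Finset.sum_congr rfl
    intro d hd
    rw [hfib d (Finset.mem_range.mp hd)]
    rfl
  rw [hsum, hlast] at key
  rw [lbCount_eq, key]
  simp

end Stmt11


namespace Stmt11

def Ed (b d n : ℕ) : ℕ := EE d ((Nat.digits b n).reverse)

lemma digits_rev (b : ℕ) (hb : 2 ≤ b) (m e : ℕ) (he : e < b) (hne : b * m + e ≠ 0) :
    (Nat.digits b (b * m + e)).reverse = (Nat.digits b m).reverse ++ [e] := by
  have h1 : Nat.digits b (b * m + e) = e :: Nat.digits b m := by
    rw [Nat.digits_def' (by omega : 1 < b) (by omega : 0 < b * m + e)]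
    congr 1
    · rw [Nat.mul_add_mod]
      exact Nat.mod_eq_of_lt he
    · congr 1
      rw [Nat.mul_add_div (by omega : 0 < b), Nat.div_eq_of_lt he]
      omega
  rw [h1, List.reverse_cons]

lemma Sb_zero (b : ℕ) : Sb b 0 = 1 := by
  simp [Sb, Nat.digits_zero, lbCount]

lemma Ed_zero (b d : ℕ) : Ed b d 0 = 0 := by
  rw [Ed, Nat.digits_zero, EE, Finset.card_eq_zero, Finset.filter_eq_empty_iff]
  intro v hv
  rw [List.reverse_nil] at hv
  obtain ⟨hsub, -⟩ := mem_Fset.mp hv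
  obtain rfl := List.sublist_nil.mp hsub
  simp

lemma N1 (b : ℕ) (hb : 2 ≤ b) (m e : ℕ) (he : e < b) :
    Sb b (b * m + e) + Ed b e m + (if e = 0 then 1 else 0) = 2 * Sb b m := by
  by_cases h0 : b * m + e = 0
  · have hm : m = 0 := by nlinarith [h0]
    have he0 : e = 0 := by omega
    subst hm; subst he0
    simp [Sb_zero, Ed_zero]
  · have hd := digits_rev b hb m e he h0
    have h1 := L1 ((Nat.digits b m).reverse) e
    have h2 := L2 ((Nat.digits b m).reverse) e
    unfold Sb Ed
    rw [hd]
    omega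

lemma N2 (b : ℕ) (hb : 2 ≤ b) (m e : ℕ) (he : e < b) :
    Ed b e (b * m + e) + (if e = 0 then 1 else 0) = Sb b m := by
  by_cases h0 : b * m + e = 0
  · have hm : m = 0 := by nlinarith [h0]
    have he0 : e = 0 := by omega
    subst hm; subst he0
    simp [Sb_zero, Ed_zero]
  · have hd := digits_rev b hb m e he h0
    have h2 := L2 ((Nat.digits b m).reverse) e
    unfold Sb Ed
    rw [hd]
    omega

lemma N3 (b : ℕ) (hb : 2 ≤ b) (m e : ℕ) (he : e < b) {d : ℕ} (hde : d ≠ e) :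
    Ed b d (b * m + e) = Ed b d m := by
  by_cases h0 : b * m + e = 0
  · have hm : m = 0 := by nlinarith [h0]
    have he0 : e = 0 := by omega
    subst hm; subst he0; simp
  · have hd := digits_rev b hb m e he h0
    unfold Ed
    rw [hd]
    exact L3 _ hde

lemma N4 (b : ℕ) (hb : 2 ≤ b) (n : ℕ) :
    (∑ d ∈ Finset.range b, Ed b d n) + 1 = Sb b n := by
  apply L4
  intro x hx
  rw [List.mem_reverse] at hx
  exact Nat.digits_lt_base (by omega) hx

lemma N5 (b : ℕ) (hb : 2 ≤ b) (n : ℕ) :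
    (∑ s ∈ Finset.range b, Sb b (b * n + s)) + Sb b n = 2 * b * Sb b n := by
  have h : ∑ s ∈ Finset.range b, (Sb b (b * n + s) + Ed b s n + (if s = 0 then 1 else 0))
      = ∑ s ∈ Finset.range b, 2 * Sb b n := by
    apply Finset.sum_congr rfl
    intro s hs
    exact N1 b hb n s (Finset.mem_range.mp hs)
  rw [Finset.sum_add_distrib, Finset.sum_add_distrib] at h
  have hite : ∑ s ∈ Finset.range b, (if s = 0 then 1 else 0) = 1 := by
    rw [Finset.sum_ite_eq' (Finset.range b) 0 (fun _ => 1)]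
    simp
    omega
  have h4 := N4 b hb n
  have hr : b * (2 * Sb b n) = 2 * b * Sb b n := by ring
  rw [hite, Finset.sum_const, Finset.card_range, smul_eq_mul] at h
  omega


lemma N1' (b : ℕ) (hb : 2 ≤ b) (m e : ℕ) (he : e < b) :
    (Sb b (b * m + e) : ℤ) =
      2 * Sb b m - Ed b e m - (if e = 0 then 1 else 0) := by
  have h := N1 b hb m e he
  have := congrArg (Nat.cast : ℕ → ℤ) h
  push_cast at this
  split at this <;> split <;> simp_all <;> linarith

lemma N2' (b : ℕ) (hb : 2 ≤ b) (m e : ℕ) (he : e < b) :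
    (Ed b e (b * m + e) : ℤ) = Sb b m - (if e = 0 then 1 else 0) := by
  have h := N2 b hb m e he
  have := congrArg (Nat.cast : ℕ → ℤ) h
  push_cast at this
  split at this <;> split <;> simp_all <;> linarith

lemma P (b : ℕ) (hb : 2 ≤ b) : ∀ i : ℕ, ∀ j < b ^ i,
    (∃ (β : ℤ) (γ : ℕ → ℤ), ∀ n : ℕ,
      (Sb b (b ^ i * n + j) : ℤ) =
        γ 0 + β * Sb b n + ∑ d ∈ Finset.range b, γ d * Ed b d n)
  ∧ (∀ e < b, ∃ (β : ℤ) (γ : ℕ → ℤ), ∀ n : ℕ,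
      (Ed b e (b ^ i * n + j) : ℤ) =
        (γ 0 - if e = 0 then 1 else 0) + β * Sb b n
          + ∑ d ∈ Finset.range b, γ d * Ed b d n) := by
  intro i
  induction i with
  | zero =>
    intro j hj
    have hj0 : j = 0 := by simpa using hj
    subst hj0
    constructor
    · refine ⟨1, 0, fun n => ?_⟩
      simp
    · intro e he
      refine ⟨0, fun d => if d = e then 1 else 0, fun n => ?_⟩
      have hsum : ∑ d ∈ Finset.range b, (if d = e then (1:ℤ) else 0) * Ed b d n
          = Ed b e n := by
        simp only [ite_mul, one_mul, zero_mul]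
        rw [Finset.sum_ite_eq' (Finset.range b) e (fun d => (Ed b d n : ℤ))]
        simp [Finset.mem_range.mpr he]
      rw [hsum]
      simp only [pow_zero, one_mul, add_zero, zero_mul]
      by_cases he0 : e = 0 <;> simp [he0] <;> omega
  | succ i ih =>
    intro j hj
    set j' := j / b with hj'def
    set e0 := j % b with he0def
    have hj' : j' < b ^ i := by
      rw [hj'def]
      apply Nat.div_lt_of_lt_mul
      rw [pow_succ] at hj
      linarith [hj]
    have he0 : e0 < b := Nat.mod_lt _ (by omega)
    have hkey : ∀ n, b ^ (i + 1) * n + j = b * (b ^ i * n + j') + e0 := by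
      intro n
      have := Nat.div_add_mod j b
      rw [pow_succ]
      rw [hj'def, he0def]
      ring_nf
      omega
    obtain ⟨⟨βa, γa, ha⟩, hBpart⟩ := ih j' hj'
    obtain ⟨βb, γb, hbe⟩ := hBpart e0 he0
    constructor
    · refine ⟨2 * βa - βb, fun d => 2 * γa d - γb d, fun n => ?_⟩
      rw [hkey n]
      have h1 := N1' b hb (b ^ i * n + j') e0 he0
      rw [ha n, hbe n] at h1
      have hsum : ∑ d ∈ Finset.range b, (2 * γa d - γb d) * (Ed b d n : ℤ)
          = 2 * (∑ d ∈ Finset.range b, γa d * Ed b d n)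
            - ∑ d ∈ Finset.range b, γb d * Ed b d n := by
        rw [Finset.mul_sum, ← Finset.sum_sub_distrib]
        apply Finset.sum_congr rfl
        intro d _
        ring
      rw [hsum, h1]
      ring
    · intro e he
      by_cases hee : e = e0
      · refine ⟨βa, γa, fun n => ?_⟩
        simp only [hee, hkey n]
        have h2 := N2' b hb (b ^ i * n + j') e0 he0
        rw [ha n] at h2
        rw [h2]
        ring
      · obtain ⟨βc, γc, hc⟩ := hBpart e he
        refine ⟨βc, γc, fun n => ?_⟩
        rw [hkey n, N3 b hb (b ^ i * n + j') e0 he0 hee]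
        exact hc n


end Stmt11

open Stmt11 in
theorem stmt11 (b : ℕ) (hb : 2 ≤ b) :
    ∀ i j : ℕ, j < b ^ i →
      ∃ (c : ℤ) (d : ℕ → ℤ), ∀ n : ℕ,
        (Sb b (b ^ i * n + j) : ℤ) =
          c * Sb b n + ∑ s ∈ Finset.range (b - 1), d s * Sb b (b * n + s) := by
  intro i j hj
  obtain ⟨β, γ, hP⟩ := (P b hb i j hj).1
  set G := ∑ d ∈ Finset.range b, γ d with hG
  refine ⟨β + 2 * G - (2 * b - 1) * γ (b - 1),
    fun s => γ (b - 1) - γ s, fun n => ?_⟩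
  have hb1 : b - 1 + 1 = b := by omega
  -- notation
  have hE : ∀ d ∈ Finset.range b, (γ d) * (Ed b d n : ℤ)
      = γ d * (2 * Sb b n - Sb b (b * n + d) - (if d = 0 then 1 else 0)) := by
    intro d hd
    have h1 := N1' b hb n d (Finset.mem_range.mp hd)
    have : (Ed b d n : ℤ) = 2 * Sb b n - Sb b (b * n + d) - (if d = 0 then 1 else 0) := by
      linarith [h1]
    rw [this]
  have hsum1 : ∑ d ∈ Finset.range b, γ d * (Ed b d n : ℤ)
      = 2 * G * Sb b n - (∑ d ∈ Finset.range b, γ d * Sb b (b * n + d)) - γ 0 := by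
    rw [Finset.sum_congr rfl hE]
    have e1 : ∑ d ∈ Finset.range b,
        γ d * (2 * (Sb b n : ℤ) - Sb b (b * n + d) - (if d = 0 then 1 else 0))
        = (∑ d ∈ Finset.range b, γ d * (2 * (Sb b n : ℤ)))
          - (∑ d ∈ Finset.range b, γ d * Sb b (b * n + d))
          - (∑ d ∈ Finset.range b, γ d * (if d = 0 then (1:ℤ) else 0)) := by
      rw [← Finset.sum_sub_distrib, ← Finset.sum_sub_distrib]
      apply Finset.sum_congr rfl
      intro d _
      ring
    rw [e1]
    have e2 : ∑ d ∈ Finset.range b, γ d * (2 * (Sb b n : ℤ)) = 2 * G * Sb b n := by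
      rw [← Finset.sum_mul]
      ring
    have e3 : ∑ d ∈ Finset.range b, γ d * (if d = 0 then (1:ℤ) else 0) = γ 0 := by
      simp only [mul_ite, mul_one, mul_zero]
      rw [Finset.sum_ite_eq' (Finset.range b) 0 γ]
      simp [Finset.mem_range]
      omega
    rw [e2, e3]
  have hN5 : (∑ s ∈ Finset.range b, (Sb b (b * n + s) : ℤ))
      = (2 * b - 1) * Sb b n := by
    have h := N5 b hb n
    have := congrArg (Nat.cast : ℕ → ℤ) h
    push_cast at this
    linarith [this]
  -- split sums at b-1
  have hsplit1 : ∑ d ∈ Finset.range b, γ d * (Sb b (b * n + d) : ℤ)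
      = (∑ d ∈ Finset.range (b - 1), γ d * Sb b (b * n + d))
        + γ (b - 1) * Sb b (b * n + (b - 1)) := by
    rw [← hb1, Finset.sum_range_succ, hb1]
  have hsplit2 : ∑ s ∈ Finset.range b, (Sb b (b * n + s) : ℤ)
      = (∑ s ∈ Finset.range (b - 1), (Sb b (b * n + s) : ℤ))
        + Sb b (b * n + (b - 1)) := by
    rw [← hb1, Finset.sum_range_succ, hb1]
  have hlast : (Sb b (b * n + (b - 1)) : ℤ)
      = (2 * b - 1) * Sb b n - ∑ s ∈ Finset.range (b - 1), (Sb b (b * n + s) : ℤ) := by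
    rw [← hN5, hsplit2]; ring
  rw [hP n, hsum1, hsplit1, hlast]
  have hfin : ∑ s ∈ Finset.range (b - 1), (γ (b - 1) - γ s) * (Sb b (b * n + s) : ℤ)
      = γ (b - 1) * (∑ s ∈ Finset.range (b - 1), (Sb b (b * n + s) : ℤ))
        - ∑ s ∈ Finset.range (b - 1), γ s * Sb b (b * n + s) := by
    rw [Finset.mul_sum, ← Finset.sum_sub_distrib]
    apply Finset.sum_congr rfl
    intro s _
    ring
  rw [hfin]
  ring
end

section
/- For all b ≥ 2, all ℓ ≥ 1, and all r with 0 ≤ r < b^ℓ, one has S_b((b−1)·b^ℓ + r) = S_b((b−1)·b^ℓ + b^ℓ − r − 1); i.e., the sequence (S_b(n)) is palindromic on the interval [(b−1)b^ℓ, b^{ℓ+1} − 1]. -/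
open List

section key

variable {b : ℕ}

/-- complement of one digit -/
private def cpl (b d : ℕ) : ℕ := b - 1 - d

private lemma cpl_cpl (hb : 2 ≤ b) {d : ℕ} (hd : d < b) : cpl b (cpl b d) = d := by
  unfold cpl; omega

private lemma map_cpl_cpl (hb : 2 ≤ b) {w : List ℕ} (hw : ∀ d ∈ w, d < b) :
    (w.map (cpl b)).map (cpl b) = w := by
  rw [List.map_map]
  conv_rhs => rw [← List.map_id w]
  refine List.map_congr_left ?_
  intro d hd
  exact cpl_cpl hb (hw d hd)

/-- the involution on words -/
private def F (b : ℕ) : List ℕ → List ℕ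
  | [] => []
  | h :: t => (if h = b - 1 then b - 1 else cpl b h) :: t.map (cpl b)

private lemma tail_sublist_of_cons {h : ℕ} {t w : List ℕ} {a : ℕ}
    (hs : (h :: t) <+ (a :: w)) : t <+ w := by
  rcases List.cons_sublist_cons'.mp hs with h1 | h2
  · exact (List.sublist_cons_self h t).trans h1
  · exact h2.2

private lemma F_mem (hb : 2 ≤ b) {w : List ℕ} (hw : ∀ d ∈ w, d < b) {v : List ℕ}
    (hv : v <+ ((b - 1) :: w)) (hh : v.head? ≠ some 0) :
    F b v <+ ((b - 1) :: w.map (cpl b)) ∧ (F b v).head? ≠ some 0 := by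
  match v with
  | [] => simp [F]
  | h :: t =>
    have hh0 : h ≠ 0 := by simpa using hh
    have htw : t <+ w := tail_sublist_of_cons hv
    by_cases hha : h = b - 1
    · simp only [F, if_pos hha]
      constructor
      · exact List.cons_sublist_cons.mpr (htw.map (cpl b))
      · simp; omega
    · simp only [F, if_neg hha]
      have hvw : (h :: t) <+ w := by
        rcases List.cons_sublist_cons'.mp hv with h1 | h2
        · exact h1
        · exact absurd h2.1 hha
      have hhb : h < b := hw h (hvw.subset (by simp))
      constructor
      · have : ((h :: t).map (cpl b)) <+ w.map (cpl b) := hvw.map (cpl b)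
        simp only [List.map_cons] at this
        exact this.trans (List.sublist_cons_self _ _)
      · simp only [List.head?_cons, ne_eq, Option.some.injEq]
        unfold cpl; omega

private lemma F_F (hb : 2 ≤ b) {w : List ℕ} (hw : ∀ d ∈ w, d < b) {v : List ℕ}
    (hv : v <+ ((b - 1) :: w)) (hh : v.head? ≠ some 0) : F b (F b v) = v := by
  match v with
  | [] => simp [F]
  | h :: t =>
    have hh0 : h ≠ 0 := by simpa using hh
    have htw : t <+ w := tail_sublist_of_cons hv
    have htb : ∀ d ∈ t, d < b := fun d hd => hw d (htw.subset hd)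
    have hmap : (t.map (cpl b)).map (cpl b) = t := map_cpl_cpl hb htb
    by_cases hha : h = b - 1
    · subst hha; simp [F, hmap]
    · have hvw : (h :: t) <+ w := by
        rcases List.cons_sublist_cons'.mp hv with h1 | h2
        · exact h1
        · exact absurd h2.1 hha
      have hhb : h < b := hw h (hvw.subset (by simp))
      have hch : cpl b h ≠ b - 1 := by unfold cpl; omega
      simp only [F, if_neg hha, if_neg hch, hmap]
      congr 1
      unfold cpl; omega

/-- main combinatorial lemma -/
private lemma key (hb : 2 ≤ b) {w : List ℕ} (hw : ∀ d ∈ w, d < b) :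
    lbCount ((b - 1) :: w) = lbCount ((b - 1) :: w.map (cpl b)) := by
  have hw' : ∀ d ∈ w.map (cpl b), d < b := by
    intro d hd
    simp only [List.mem_map] at hd
    obtain ⟨x, _, rfl⟩ := hd
    unfold cpl; omega
  unfold lbCount
  rw [← List.card_toFinset, ← List.card_toFinset]
  rw [List.toFinset_filter, List.toFinset_filter]
  refine Finset.card_bij' (fun v _ => F b v) (fun v _ => F b v) ?_ ?_ ?_ ?_
  · intro v hv
    simp only [Finset.mem_filter, List.mem_toFinset, List.mem_sublists,
      decide_not, Bool.not_eq_true', decide_eq_false_iff_not] at hv ⊢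
    exact F_mem hb hw hv.1 hv.2
  · intro v hv
    simp only [Finset.mem_filter, List.mem_toFinset, List.mem_sublists,
      decide_not, Bool.not_eq_true', decide_eq_false_iff_not] at hv ⊢
    have := F_mem hb hw' hv.1 hv.2
    rwa [map_cpl_cpl hb hw] at this
  · intro v hv
    simp only [Finset.mem_filter, List.mem_toFinset, List.mem_sublists,
      decide_not, Bool.not_eq_true', decide_eq_false_iff_not] at hv
    exact F_F hb hw hv.1 hv.2
  · intro v hv
    simp only [Finset.mem_filter, List.mem_toFinset, List.mem_sublists,
      decide_not, Bool.not_eq_true', decide_eq_false_iff_not] at hv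
    exact F_F hb hw' hv.1 hv.2

end key

section digits

variable {b : ℕ}

private def padDig (b : ℕ) : ℕ → ℕ → List ℕ
  | 0, _ => []
  | (ℓ + 1), r => r % b :: padDig b ℓ (r / b)

private lemma length_padDig (b ℓ r : ℕ) : (padDig b ℓ r).length = ℓ := by
  induction ℓ generalizing r with
  | zero => rfl
  | succ n ih => simp [padDig, ih]

private lemma mem_padDig_lt (hb : 2 ≤ b) (ℓ r : ℕ) : ∀ d ∈ padDig b ℓ r, d < b := by
  induction ℓ generalizing r with
  | zero => simp [padDig]
  | succ n ih =>
    intro d hd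
    simp only [padDig, List.mem_cons] at hd
    rcases hd with rfl | hd
    · exact Nat.mod_lt _ (by omega)
    · exact ih _ d hd

private lemma ofDigits_padDig (hb : 2 ≤ b) {ℓ r : ℕ} (hr : r < b ^ ℓ) :
    Nat.ofDigits b (padDig b ℓ r) = r := by
  induction ℓ generalizing r with
  | zero =>
    have : r = 0 := by simpa using hr
    subst this; rfl
  | succ n ih =>
    have hdiv : r / b < b ^ n := by
      rw [Nat.div_lt_iff_lt_mul (by omega : 0 < b)]
      calc r < b ^ (n + 1) := hr
        _ = b ^ n * b := by ring
    simp only [padDig, Nat.ofDigits_cons, ih hdiv]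
    have := Nat.mod_add_div r b
    push_cast
    omega

private lemma ofDigits_map_cpl (hb : 2 ≤ b) {L : List ℕ} (hL : ∀ d ∈ L, d < b) :
    Nat.ofDigits b (L.map (cpl b)) + Nat.ofDigits b L + 1 = b ^ L.length := by
  induction L with
  | nil => simp [Nat.ofDigits]
  | cons x t ih =>
    have hx : x < b := hL x (by simp)
    have iht := ih (fun d hd => hL d (by simp [hd]))
    simp only [List.map_cons, Nat.ofDigits_cons, List.length_cons]
    have h2 : b * Nat.ofDigits b (t.map (cpl b)) + b * Nat.ofDigits b t + b
        = b * b ^ t.length := by rw [← iht]; push_cast; ring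
    have hcx : cpl b x + x + 1 = b := by unfold cpl; omega
    have hpow : (b : ℕ) ^ (t.length + 1) = b * b ^ t.length := by ring
    push_cast
    rw [hpow]
    linarith [h2, hcx]

private lemma digits_top (hb : 2 ≤ b) {ℓ r : ℕ} {L : List ℕ}
    (hlen : L.length = ℓ) (hL : ∀ d ∈ L, d < b) (hof : Nat.ofDigits b L = r) :
    Nat.digits b ((b - 1) * b ^ ℓ + r) = L ++ [b - 1] := by
  have h1 : ∀ d ∈ L ++ [b - 1], d < b := by
    intro d hd
    rcases List.mem_append.mp hd with hd | hd
    · exact hL d hd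
    · simp at hd; omega
  have h2 : ∀ (h : L ++ [b - 1] ≠ []), (L ++ [b - 1]).getLast h ≠ 0 := by
    intro h
    rw [List.getLast_concat]
    omega
  have := Nat.digits_ofDigits b (by omega) (L ++ [b - 1]) h1 h2
  rw [Nat.ofDigits_append, hof, hlen, Nat.ofDigits_singleton] at this
  rw [← this]
  congr 1
  push_cast
  ring

end digits

theorem stmt12 (b ℓ r : ℕ) (hb : 2 ≤ b) (hℓ : 1 ≤ ℓ) (hr : r < b ^ ℓ) :
    Sb b ((b - 1) * b ^ ℓ + r) = Sb b ((b - 1) * b ^ ℓ + b ^ ℓ - r - 1) := by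
  have hpow : 1 ≤ b ^ ℓ := Nat.one_le_pow _ _ (by omega)
  set L := padDig b ℓ r with hLdef
  have hlen : L.length = ℓ := length_padDig b ℓ r
  have hLb : ∀ d ∈ L, d < b := mem_padDig_lt hb ℓ r
  have hof : Nat.ofDigits b L = r := ofDigits_padDig hb hr
  have h1 : Nat.digits b ((b - 1) * b ^ ℓ + r) = L ++ [b - 1] :=
    digits_top hb hlen hLb hof
  have hL'b : ∀ d ∈ L.map (cpl b), d < b := by
    intro d hd
    simp only [List.mem_map] at hd
    obtain ⟨x, _, rfl⟩ := hd
    unfold cpl; omega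
  have hof' : Nat.ofDigits b (L.map (cpl b)) = b ^ ℓ - 1 - r := by
    have := ofDigits_map_cpl hb hLb
    rw [hof, hlen] at this
    omega
  have h2 : Nat.digits b ((b - 1) * b ^ ℓ + (b ^ ℓ - 1 - r)) = L.map (cpl b) ++ [b - 1] :=
    digits_top hb (by simp [hlen]) hL'b hof'
  have heq : (b - 1) * b ^ ℓ + b ^ ℓ - r - 1 = (b - 1) * b ^ ℓ + (b ^ ℓ - 1 - r) := by
    omega
  rw [Sb, Sb, heq, h1, h2, List.reverse_append, List.reverse_append]
  simp only [List.reverse_cons, List.reverse_nil, List.nil_append, List.singleton_append]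
  rw [← List.map_reverse]
  exact key hb (fun d hd => hLb d (List.mem_reverse.mp hd))
end

section
/- For any base b ≥ 2 and any word u over {0,...,b-1}, let ū be obtained from u by replacing each letter a by (b−1)−a. Then the number of words in L_b occurring as scattered subwords of (b−1)u equals the number of words in L_b occurring as scattered subwords of (b−1)ū. -/
section aux

variable (b : ℕ)

/-- Complement-flip map on candidate subwords. -/
def flipF (v : List ℕ) : List ℕ :=
  match v with
  | [] => []
  | a :: x => if a = b - 1 then (b - 1) :: x.map (fun c => b - 1 - c)
              else (a :: x).map (fun c => b - 1 - c)

lemma map_comp_comp (l : List ℕ) (hl : ∀ a ∈ l, a < b) :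
    (l.map (fun a => b - 1 - a)).map (fun a => b - 1 - a) = l := by
  induction l with
  | nil => simp
  | cons a t ih =>
    simp only [List.map_cons, List.cons.injEq]
    refine ⟨?_, ih fun x hx => hl x (by simp [hx])⟩
    have := hl a (by simp); omega

lemma mem_aux (w v : List ℕ) :
    v ∈ (w.sublists.filter (fun v => v.head? ≠ some 0)).toFinset ↔
      v.Sublist w ∧ v.head? ≠ some 0 := by
  simp [List.mem_filter, List.mem_sublists]

lemma flipF_maps (hb : 2 ≤ b) (u : List ℕ) (hu : ∀ d ∈ u, d < b) (v : List ℕ)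
    (h1 : v.Sublist ((b - 1) :: u)) (h2 : v.head? ≠ some 0) :
    (flipF b v).Sublist ((b - 1) :: u.map (fun a => b - 1 - a)) ∧
      (flipF b v).head? ≠ some 0 := by
  match v with
  | [] => simp [flipF]
  | a :: x =>
    by_cases ha : a = b - 1
    · subst ha
      have hx : x.Sublist u := h1.of_cons_cons
      have : ((b-1) :: x.map (fun c => b - 1 - c)).Sublist
          ((b - 1) :: u.map (fun a => b - 1 - a)) :=
        List.cons_sublist_cons.mpr (hx.map _)
      refine ⟨by simpa [flipF] using this, ?_⟩
      simp [flipF]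
      omega
    · have hxu : (a :: x).Sublist u := by
        cases h1 with
        | cons _ h => exact h
        | cons_cons _ h => exact absurd rfl ha
      have halt : a < b := hu a (hxu.subset (by simp))
      have ha0 : a ≠ 0 := by simpa using h2
      constructor
      · have : ((a :: x).map (fun c => b - 1 - c)).Sublist
            (u.map (fun a => b - 1 - a)) := hxu.map _
        simp only [flipF, if_neg ha]
        exact this.cons _
      · simp [flipF, if_neg ha]
        omega

lemma flipF_invol (hb : 2 ≤ b) (u : List ℕ) (hu : ∀ d ∈ u, d < b) (v : List ℕ)
    (h1 : v.Sublist ((b - 1) :: u)) (h2 : v.head? ≠ some 0) :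
    flipF b (flipF b v) = v := by
  match v with
  | [] => simp [flipF]
  | a :: x =>
    by_cases ha : a = b - 1
    · subst ha
      have hx : x.Sublist u := h1.of_cons_cons
      have hxd : ∀ d ∈ x, d < b := fun d hd => hu d (hx.subset hd)
      simp [flipF, map_comp_comp b x hxd]
    · have hxu : (a :: x).Sublist u := by
        cases h1 with
        | cons _ h => exact h
        | cons_cons _ h => exact absurd rfl ha
      have hd : ∀ d ∈ a :: x, d < b := fun d hdm => hu d (hxu.subset hdm)
      have halt : a < b := hd a (by simp)
      have ha0 : a ≠ 0 := by simpa using h2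
      have hne : b - 1 - a ≠ b - 1 := by omega
      have h3 := map_comp_comp b (a :: x) hd
      simp only [List.map_cons] at h3
      simp only [List.cons.injEq] at h3
      rw [List.map_map] at h3
      simp [flipF, if_neg ha, if_neg hne]
      exact ⟨h3.1, h3.2⟩

end aux

theorem stmt13 (b : ℕ) (hb : 2 ≤ b) (u : List ℕ) (hu : ∀ d ∈ u, d < b) :
    lbCount ((b - 1) :: u) = lbCount ((b - 1) :: u.map (fun a => b - 1 - a)) := by
  classical
  have key : ∀ w : List ℕ, lbCount w =
      ((w.sublists.filter (fun v => v.head? ≠ some 0)).toFinset).card := by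
    intro w; rw [lbCount, List.card_toFinset]
  rw [key, key]
  have hu' : ∀ d ∈ u.map (fun a => b - 1 - a), d < b := by
    intro d hd
    simp only [List.mem_map] at hd
    obtain ⟨a, ha, rfl⟩ := hd
    have := hu a ha; omega
  have hback : (u.map (fun a => b - 1 - a)).map (fun a => b - 1 - a) = u :=
    map_comp_comp b u hu
  refine Finset.card_bij' (fun v _ => flipF b v) (fun v _ => flipF b v) ?_ ?_ ?_ ?_
  · intro v hv
    rw [mem_aux] at hv ⊢
    exact flipF_maps b hb u hu v hv.1 hv.2
  · intro v hv
    rw [mem_aux] at hv ⊢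
    have := flipF_maps b hb (u.map (fun a => b - 1 - a)) hu' v hv.1 hv.2
    rwa [hback] at this
  · intro v hv
    rw [mem_aux] at hv
    exact flipF_invol b hb u hu v hv.1 hv.2
  · intro v hv
    rw [mem_aux] at hv
    exact flipF_invol b hb (u.map (fun a => b - 1 - a)) hu' v hv.1 hv.2
end

section
/- For all b ≥ 2, all x ∈ {1,...,b−1}, all ℓ ≥ 1, and all r with 0 ≤ r ≤ b^{ℓ-1}, one has A_b(x·b^ℓ + r) = (2b−2)·(2x−1)·(2b−1)^{ℓ-1} + A_b(x·b^{ℓ-1} + r) + A_b(r). -/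
open Finset

/-! ### Finset of scattered subwords -/

/-- The finset of all sublists (scattered subwords) of `u`. -/
def subF (u : List ℕ) : Finset (List ℕ) := u.sublists.toFinset

@[simp] lemma mem_subF {u v : List ℕ} : v ∈ subF u ↔ v.Sublist u := by
  simp [subF]

/-- Number of distinct scattered subwords (including the empty word). -/
def Tw (u : List ℕ) : ℕ := (subF u).card

/-- Number of distinct scattered subwords with no leading zero (incl. empty). -/
def Sw (u : List ℕ) : ℕ := ((subF u).filter (fun v => v.head? ≠ some 0)).card

/-- Number of distinct scattered subwords starting with the letter `a`. -/
def Occ (u : List ℕ) (a : ℕ) : ℕ := ((subF u).filter (fun v => v.head? = some a)).card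

lemma subF_cons (a : ℕ) (u : List ℕ) :
    subF (a :: u) = subF u ∪ (subF u).image (a :: ·) := by
  ext v
  simp only [mem_subF, Finset.mem_union, Finset.mem_image, List.sublist_cons_iff]
  constructor
  · rintro (h | ⟨r, rfl, hr⟩)
    · exact Or.inl h
    · exact Or.inr ⟨r, by simpa using hr, rfl⟩
  · rintro (h | ⟨r, hr, rfl⟩)
    · exact Or.inl h
    · exact Or.inr ⟨r, rfl, by simpa using hr⟩

lemma S1 (a : ℕ) (u : List ℕ) :
    (subF (a :: u)).filter (fun v => v.head? = some a) = (subF u).image (a :: ·) := by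
  ext v
  simp only [Finset.mem_filter, Finset.mem_image, mem_subF]
  constructor
  · rintro ⟨hs, hh⟩
    cases v with
    | nil => simp at hh
    | cons c t =>
      simp only [List.head?_cons, Option.some.injEq] at hh
      subst hh
      refine ⟨t, ?_, rfl⟩
      rcases List.sublist_cons_iff.mp hs with h | ⟨r, hr, hr'⟩
      · exact (List.sublist_cons_self c t).trans h
      · cases hr; exact hr'
  · rintro ⟨t, ht, rfl⟩
    exact ⟨(ht.cons₂ a), rfl⟩

lemma S2 {a c : ℕ} (h : c ≠ a) (u : List ℕ) :
    (subF (a :: u)).filter (fun v => v.head? = some c)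
      = (subF u).filter (fun v => v.head? = some c) := by
  ext v
  simp only [Finset.mem_filter, mem_subF]
  constructor
  · rintro ⟨hs, hh⟩
    refine ⟨?_, hh⟩
    rcases List.sublist_cons_iff.mp hs with h' | ⟨r, rfl, hr⟩
    · exact h'
    · simp only [List.head?_cons, Option.some.injEq] at hh
      exact absurd hh.symm h
  · rintro ⟨hs, hh⟩
    exact ⟨hs.trans (List.sublist_cons_self a u), hh⟩

lemma S3 (u : List ℕ) :
    (subF (0 :: u)).filter (fun v => v.head? ≠ some 0)
      = (subF u).filter (fun v => v.head? ≠ some 0) := by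
  ext v
  simp only [Finset.mem_filter, mem_subF]
  constructor
  · rintro ⟨hs, hh⟩
    refine ⟨?_, hh⟩
    rcases List.sublist_cons_iff.mp hs with h' | ⟨r, rfl, hr⟩
    · exact h'
    · simp at hh
  · rintro ⟨hs, hh⟩
    exact ⟨hs.trans (List.sublist_cons_self 0 u), hh⟩

lemma S4 {a : ℕ} (ha : a ≠ 0) (u : List ℕ) :
    (subF (a :: u)).filter (fun v => v.head? ≠ some 0)
      = (subF u).filter (fun v => v.head? ≠ some 0) ∪ (subF u).image (a :: ·) := by
  ext v
  simp only [Finset.mem_filter, Finset.mem_union, Finset.mem_image, mem_subF]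
  constructor
  · rintro ⟨hs, hh⟩
    rcases List.sublist_cons_iff.mp hs with h' | ⟨r, rfl, hr⟩
    · exact Or.inl ⟨h', hh⟩
    · exact Or.inr ⟨r, hr, rfl⟩
  · rintro (⟨hs, hh⟩ | ⟨r, hr, rfl⟩)
    · exact ⟨hs.trans (List.sublist_cons_self a u), hh⟩
    · exact ⟨hr.cons₂ a, by simpa using ha⟩

lemma S5 {a : ℕ} (ha : a ≠ 0) (u : List ℕ) :
    ((subF u).filter (fun v => v.head? ≠ some 0)) ∩ ((subF u).image (a :: ·))
      = (subF u).filter (fun v => v.head? = some a) := by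
  ext v
  simp only [Finset.mem_inter, Finset.mem_filter, Finset.mem_image, mem_subF]
  constructor
  · rintro ⟨⟨hs, _⟩, ⟨r, hr, rfl⟩⟩
    exact ⟨hs, rfl⟩
  · rintro ⟨hs, hh⟩
    cases v with
    | nil => simp at hh
    | cons c t =>
      simp only [List.head?_cons, Option.some.injEq] at hh
      subst hh
      exact ⟨⟨hs, by simpa using ha⟩, ⟨t, (List.tail_sublist _).trans hs, rfl⟩⟩

lemma S6 (a : ℕ) (u : List ℕ) :
    subF u ∩ ((subF u).image (a :: ·))
      = (subF u).filter (fun v => v.head? = some a) := by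
  ext v
  simp only [Finset.mem_inter, Finset.mem_filter, Finset.mem_image, mem_subF]
  constructor
  · rintro ⟨hs, ⟨r, hr, rfl⟩⟩
    exact ⟨hs, rfl⟩
  · rintro ⟨hs, hh⟩
    cases v with
    | nil => simp at hh
    | cons c t =>
      simp only [List.head?_cons, Option.some.injEq] at hh
      subst hh
      exact ⟨hs, ⟨t, (List.tail_sublist _).trans hs, rfl⟩⟩

lemma card_image_cons (a : ℕ) (u : List ℕ) :
    ((subF u).image (a :: ·)).card = Tw u :=
  Finset.card_image_of_injective _ List.cons_injective

lemma Tw_cons (a : ℕ) (u : List ℕ) : Tw (a :: u) + Occ u a = 2 * Tw u := by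
  have h := Finset.card_union_add_card_inter (subF u) ((subF u).image (a :: ·))
  rw [← subF_cons, S6, card_image_cons] at h
  simp only [Tw, Occ, subF] at h ⊢
  omega

lemma Occ_cons_self (a : ℕ) (u : List ℕ) : Occ (a :: u) a = Tw u := by
  unfold Occ
  rw [S1, card_image_cons]

lemma Occ_cons_ne {a c : ℕ} (h : c ≠ a) (u : List ℕ) : Occ (a :: u) c = Occ u c := by
  unfold Occ
  rw [S2 h]

lemma Sw_cons_zero (u : List ℕ) : Sw (0 :: u) = Sw u := by
  unfold Sw
  rw [S3]

lemma Sw_cons {a : ℕ} (ha : a ≠ 0) (u : List ℕ) :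
    Sw (a :: u) + Occ u a = Sw u + Tw u := by
  have h := Finset.card_union_add_card_inter
    ((subF u).filter (fun v => v.head? ≠ some 0)) ((subF u).image (a :: ·))
  rw [← S4 ha, S5 ha, card_image_cons] at h
  simp only [Tw, Sw, Occ, subF] at h ⊢
  omega

lemma Tw_eq_Sw_add_Occ (u : List ℕ) : Tw u = Sw u + Occ u 0 := by
  have h := Finset.card_filter_add_card_filter_not
    (s := subF u) (p := fun v => v.head? = some 0)
  have e : (subF u).filter (fun v => ¬ (v.head? = some 0))
      = (subF u).filter (fun v => v.head? ≠ some 0) :=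
    Finset.filter_congr fun _ _ => Iff.rfl
  rw [e] at h
  simp only [Tw, Sw, Occ, subF] at h ⊢
  omega

/-- Key local identity: for `x ≠ 0`, `Sw (x :: 0 :: w) = Sw (x :: w) + Sw w`. -/
lemma L1w {x : ℕ} (hx : x ≠ 0) (w : List ℕ) :
    Sw (x :: 0 :: w) = Sw (x :: w) + Sw w := by
  have h1 := Sw_cons hx (0 :: w)
  rw [Occ_cons_ne hx, Sw_cons_zero] at h1
  have h2 := Tw_cons 0 w
  have h3 := Tw_eq_Sw_add_Occ w
  have h4 := Sw_cons hx w
  omega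

@[simp] lemma Tw_nil : Tw ([] : List ℕ) = 1 := rfl
@[simp] lemma Sw_nil : Sw ([] : List ℕ) = 1 := rfl
@[simp] lemma Occ_nil (c : ℕ) : Occ ([] : List ℕ) c = 0 := rfl

lemma lbCount_eq_Sw (u : List ℕ) : lbCount u = Sw u := by
  unfold lbCount Sw subF
  rw [← List.card_toFinset, List.toFinset_filter]
  congr 1
  apply Finset.filter_congr
  intro v _
  simp

lemma Sb_eq_Sw (b n : ℕ) : Sb b n = Sw ((Nat.digits b n).reverse) :=
  lbCount_eq_Sw _

/-! ### Padded base-`b` words -/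

/-- The base-`b` word of length `ℓ` representing `m < b^ℓ` (MSB first). -/
def padw (b : ℕ) : ℕ → ℕ → List ℕ
  | 0, _ => []
  | ℓ+1, m => m / b ^ ℓ :: padw b ℓ (m % b ^ ℓ)

lemma padw_cons {b : ℕ} (hb : 2 ≤ b) (ℓ c m : ℕ) (hm : m < b ^ ℓ) :
    padw b (ℓ+1) (c * b ^ ℓ + m) = c :: padw b ℓ m := by
  have hB : 0 < b ^ ℓ := pow_pos (by omega) ℓ
  have h1 : (c * b ^ ℓ + m) / b ^ ℓ = c := by
    rw [Nat.add_comm, Nat.add_mul_div_right _ _ hB, Nat.div_eq_of_lt hm]; omega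
  have h2 : (c * b ^ ℓ + m) % b ^ ℓ = m := by
    rw [Nat.add_comm, Nat.add_mul_mod_self_right, Nat.mod_eq_of_lt hm]
  show _ / _ :: padw b ℓ _ = _
  rw [h1, h2]

lemma Sw_replicate (j : ℕ) (w : List ℕ) :
    Sw (List.replicate j 0 ++ w) = Sw w := by
  induction j with
  | zero => rfl
  | succ j ih => rw [List.replicate_succ, List.cons_append, Sw_cons_zero, ih]

lemma digits_len_le {b m ℓ : ℕ} (hb : 2 ≤ b) (hm : m < b ^ ℓ) :
    (Nat.digits b m).length ≤ ℓ := by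
  rcases Nat.eq_zero_or_pos m with rfl | hm0
  · simp
  · rw [Nat.digits_len b m (by omega) (by omega)]
    have := (Nat.log_lt_iff_lt_pow (by omega : 1 < b) (by omega : m ≠ 0)).mpr hm
    omega

lemma digits_high {b x ℓ m : ℕ} (hb : 2 ≤ b) (hx : 0 < x) (hm : m < b ^ ℓ) :
    Nat.digits b (m + b ^ ℓ * x) =
      Nat.digits b m ++ List.replicate (ℓ - (Nat.digits b m).length) 0
        ++ Nat.digits b x := by
  have hlen := digits_len_le hb hm
  rw [Nat.digits_append_zeroes_append_digits (by omega : 1 < b) hx,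
    show (Nat.digits b m).length + (ℓ - (Nat.digits b m).length) = ℓ by omega]

lemma digits_single {b x : ℕ} (hb : 2 ≤ b) (hx : 0 < x) (hxb : x < b) :
    Nat.digits b x = [x] := by
  rw [Nat.digits_def' (by omega : 1 < b) hx, Nat.mod_eq_of_lt hxb,
    Nat.div_eq_of_lt hxb]
  simp

lemma padw_eq {b : ℕ} (hb : 2 ≤ b) :
    ∀ ℓ m, m < b ^ ℓ →
      padw b ℓ m = List.replicate (ℓ - (Nat.digits b m).length) 0
        ++ (Nat.digits b m).reverse := by
  intro ℓ
  induction ℓ with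
  | zero =>
    intro m hm
    rw [pow_zero] at hm
    have : m = 0 := by omega
    subst this
    simp [padw]
  | succ ℓ ih =>
    intro m hm
    have hB : 0 < b ^ ℓ := pow_pos (by omega) ℓ
    by_cases hc : m < b ^ ℓ
    · have h1 : m / b ^ ℓ = 0 := Nat.div_eq_of_lt hc
      have h2 : m % b ^ ℓ = m := Nat.mod_eq_of_lt hc
      have hlen := digits_len_le hb hc
      show m / b ^ ℓ :: padw b ℓ (m % b ^ ℓ) = _
      rw [h1, h2, ih m hc,
        show ℓ + 1 - (Nat.digits b m).length = (ℓ - (Nat.digits b m).length) + 1 by omega,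
        List.replicate_succ]
      rfl
    · push_neg at hc
      have hdm := Nat.div_add_mod m (b ^ ℓ)
      set c := m / b ^ ℓ with hcdef
      set m' := m % b ^ ℓ with hm'def
      have hc1 : 0 < c := Nat.div_pos hc hB
      have hm' : m' < b ^ ℓ := Nat.mod_lt _ hB
      have hmeq : m = m' + b ^ ℓ * c := by omega
      have hcb : c < b := by
        rw [hcdef]
        exact Nat.div_lt_of_lt_mul (by rw [← pow_succ]; exact hm)
      have hd : Nat.digits b m =
          Nat.digits b m' ++ List.replicate (ℓ - (Nat.digits b m').length) 0 ++ [c] := by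
        rw [hmeq, digits_high hb hc1 hm', digits_single hb hc1 hcb]
      have hlen' := digits_len_le hb hm'
      have hL : (Nat.digits b m).length = ℓ + 1 := by
        rw [hd]; simp; omega
      show c :: padw b ℓ m' = _
      rw [ih m' hm', hd]
      have hlen0 : ℓ + 1 -
          (Nat.digits b m' ++ List.replicate (ℓ - (Nat.digits b m').length) 0 ++ [c]).length = 0 := by
        simp only [List.length_append, List.length_replicate, List.length_cons,
          List.length_nil]
        omega
      rw [hlen0]
      simp [List.reverse_append]

lemma Sw_padw {b : ℕ} (hb : 2 ≤ b) {ℓ m : ℕ} (hm : m < b ^ ℓ) :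
    Sw (padw b ℓ m) = Sb b m := by
  rw [padw_eq hb ℓ m hm, Sw_replicate, Sb_eq_Sw]

lemma digits_rev_high {b x ℓ m : ℕ} (hb : 2 ≤ b) (hx : 0 < x) (hxb : x < b)
    (hm : m < b ^ ℓ) :
    (Nat.digits b (x * b ^ ℓ + m)).reverse = x :: padw b ℓ m := by
  have h : x * b ^ ℓ + m = m + b ^ ℓ * x := by ring
  rw [h, digits_high hb hx hm, digits_single hb hx hxb, padw_eq hb ℓ m hm]
  simp [List.reverse_append]

/-! ### Sums over all length-`ℓ` words -/

lemma sum_range_add' (f : ℕ → ℕ) (n m : ℕ) :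
    ∑ i ∈ range (n + m), f i = ∑ i ∈ range n, f i + ∑ i ∈ range m, f (n + i) := by
  induction m with
  | zero => simp
  | succ m ih =>
    rw [show n + (m + 1) = (n + m) + 1 by omega, Finset.sum_range_succ, ih,
      Finset.sum_range_succ]
    omega

lemma sum_range_mul (f : ℕ → ℕ) (k B : ℕ) :
    ∑ m ∈ range (k * B), f m = ∑ c ∈ range k, ∑ m ∈ range B, f (c * B + m) := by
  induction k with
  | zero => simp
  | succ k ih =>
    rw [Nat.succ_mul, sum_range_add' f (k * B) B, ih, Finset.sum_range_succ]

def TSs (b ℓ : ℕ) : ℕ := ∑ m ∈ range (b ^ ℓ), Tw (padw b ℓ m)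
def TOs (b ℓ c : ℕ) : ℕ := ∑ m ∈ range (b ^ ℓ), Occ (padw b ℓ m) c
def SSs (b ℓ : ℕ) : ℕ := ∑ m ∈ range (b ^ ℓ), Sw (padw b ℓ m)

lemma sum_pow_succ {b : ℕ} (hb : 2 ≤ b) (ℓ : ℕ) (g : List ℕ → ℕ) :
    ∑ m ∈ range (b ^ (ℓ+1)), g (padw b (ℓ+1) m)
      = ∑ c ∈ range b, ∑ m ∈ range (b ^ ℓ), g (c :: padw b ℓ m) := by
  rw [pow_succ', sum_range_mul]
  refine Finset.sum_congr rfl fun c _ => Finset.sum_congr rfl fun m hm => ?_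
  rw [padw_cons hb ℓ c m (Finset.mem_range.mp hm)]

lemma TS_rec {b : ℕ} (hb : 2 ≤ b) (ℓ : ℕ) :
    TSs b (ℓ+1) + ∑ c ∈ range b, TOs b ℓ c = 2 * b * TSs b ℓ := by
  have key : TSs b (ℓ+1) = ∑ c ∈ range b, ∑ m ∈ range (b ^ ℓ), Tw (c :: padw b ℓ m) := by
    unfold TSs
    exact sum_pow_succ hb ℓ Tw
  rw [key, ← Finset.sum_add_distrib]
  have step : ∀ c ∈ range b,
      ((∑ m ∈ range (b ^ ℓ), Tw (c :: padw b ℓ m)) + TOs b ℓ c) = 2 * TSs b ℓ := by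
    intro c _
    unfold TOs TSs
    rw [← Finset.sum_add_distrib, Finset.mul_sum]
    exact Finset.sum_congr rfl fun m _ => Tw_cons c (padw b ℓ m)
  rw [Finset.sum_congr rfl step, Finset.sum_const, Finset.card_range, smul_eq_mul]
  ring

lemma TO_rec {b : ℕ} (hb : 2 ≤ b) {c : ℕ} (hc : c < b) (ℓ : ℕ) :
    TOs b (ℓ+1) c = TSs b ℓ + (b - 1) * TOs b ℓ c := by
  have key : TOs b (ℓ+1) c = ∑ c' ∈ range b, ∑ m ∈ range (b ^ ℓ), Occ (c' :: padw b ℓ m) c := by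
    unfold TOs
    exact sum_pow_succ hb ℓ (fun w => Occ w c)
  rw [key]
  have hmem : c ∈ range b := Finset.mem_range.mpr hc
  rw [← Finset.add_sum_erase _ _ hmem]
  congr 1
  · rw [Finset.sum_congr rfl fun m _ => Occ_cons_self c (padw b ℓ m)]
    rfl
  · have : ∀ c' ∈ (range b).erase c,
        (∑ m ∈ range (b ^ ℓ), Occ (c' :: padw b ℓ m) c) = TOs b ℓ c := by
      intro c' hc'
      have hne : c ≠ c' := fun h => (Finset.mem_erase.mp hc').1 h.symm
      exact Finset.sum_congr rfl fun m _ => Occ_cons_ne hne (padw b ℓ m)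
    rw [Finset.sum_congr rfl this, Finset.sum_const, Finset.card_erase_of_mem hmem,
      Finset.card_range, smul_eq_mul]


lemma Block_rec {b : ℕ} (hb : 2 ≤ b) {c : ℕ} (hc : c ≠ 0) (ℓ : ℕ) :
    (∑ m ∈ range (b ^ ℓ), Sw (c :: padw b ℓ m)) + TOs b ℓ c = SSs b ℓ + TSs b ℓ := by
  unfold TOs SSs TSs
  rw [← Finset.sum_add_distrib, ← Finset.sum_add_distrib]
  exact Finset.sum_congr rfl fun m _ => Sw_cons hc (padw b ℓ m)

@[simp] lemma padw_zero (b m : ℕ) : padw b 0 m = [] := rfl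

@[simp] lemma TSs_zero (b : ℕ) : TSs b 0 = 1 := by simp [TSs]
@[simp] lemma TOs_zero (b c : ℕ) : TOs b 0 c = 0 := by simp [TOs]
@[simp] lemma SSs_zero (b : ℕ) : SSs b 0 = 1 := by simp [SSs]

lemma TO_symm {b : ℕ} (hb : 2 ≤ b) (ℓ : ℕ) :
    ∀ c, c < b → ∀ c', c' < b → TOs b ℓ c = TOs b ℓ c' := by
  induction ℓ with
  | zero => intros; simp
  | succ ℓ ih =>
    intro c hc c' hc'
    rw [TO_rec hb hc, TO_rec hb hc', ih c hc c' hc']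

lemma TS_TO {b : ℕ} (hb : 2 ≤ b) (ℓ : ℕ) :
    ∀ c, c < b → TSs b ℓ = TOs b ℓ c + (2 * b - 1) ^ ℓ := by
  induction ℓ with
  | zero => intros; simp
  | succ ℓ ih =>
    intro c hc
    have h1 := TS_rec hb ℓ
    have h2 : ∑ c' ∈ range b, TOs b ℓ c' = b * TOs b ℓ c := by
      rw [Finset.sum_congr rfl fun c' hc' =>
        TO_symm hb ℓ c' (Finset.mem_range.mp hc') c hc, Finset.sum_const,
        Finset.card_range, smul_eq_mul]
    rw [h2] at h1
    have h3 := ih c hc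
    rw [TO_rec hb hc]
    have hb1 : (1 : ℕ) ≤ b := by omega
    have hb2 : (1 : ℕ) ≤ 2 * b := by omega
    zify [hb1, hb2] at h1 h3 ⊢
    rw [pow_succ]
    linear_combination h1 + (2 * (b:ℤ) - 1) * h3

lemma SS_closed {b : ℕ} (hb : 2 ≤ b) (ℓ : ℕ) :
    SSs b ℓ = (2 * b - 1) ^ ℓ := by
  induction ℓ with
  | zero => simp
  | succ ℓ ih =>
    have h0 : (0 : ℕ) ∈ range b := Finset.mem_range.mpr (by omega)
    have key : SSs b (ℓ+1)
        = ∑ c ∈ range b, ∑ m ∈ range (b ^ ℓ), Sw (c :: padw b ℓ m) := by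
      unfold SSs
      exact sum_pow_succ hb ℓ Sw
    rw [key, ← Finset.add_sum_erase _ _ h0]
    have hz : (∑ m ∈ range (b ^ ℓ), Sw ((0:ℕ) :: padw b ℓ m)) = SSs b ℓ := by
      unfold SSs
      exact Finset.sum_congr rfl fun m _ => Sw_cons_zero (padw b ℓ m)
    have hblock : ∀ c ∈ (range b).erase 0,
        (∑ m ∈ range (b ^ ℓ), Sw (c :: padw b ℓ m)) = 2 * (2 * b - 1) ^ ℓ := by
      intro c hcmem
      obtain ⟨hc0, hcb⟩ := Finset.mem_erase.mp hcmem
      have hcb' : c < b := Finset.mem_range.mp hcb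
      have h1 := Block_rec hb hc0 ℓ
      have h2 := TS_TO hb ℓ c hcb'
      omega
    rw [hz, ih, Finset.sum_congr rfl hblock, Finset.sum_const,
      Finset.card_erase_of_mem h0, Finset.card_range, smul_eq_mul, pow_succ]
    have hb1 : (1 : ℕ) ≤ b := by omega
    have hb2 : (1 : ℕ) ≤ 2 * b := by omega
    zify [hb1, hb2]
    ring

/-! ### Number-level consequences -/

lemma Asum_add (b n r : ℕ) :
    Asum b (n + r) = Asum b n + ∑ m ∈ range r, Sb b (n + m) :=
  sum_range_add' (Sb b) n r

lemma A_pow {b : ℕ} (hb : 2 ≤ b) (ℓ : ℕ) : Asum b (b ^ ℓ) = (2 * b - 1) ^ ℓ := by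
  rw [← SS_closed hb ℓ]
  unfold Asum SSs
  exact Finset.sum_congr rfl fun m hm =>
    (Sw_padw hb (Finset.mem_range.mp hm)).symm

lemma Block_num {b c : ℕ} (hb : 2 ≤ b) (hc : 0 < c) (hcb : c < b) (ℓ : ℕ) :
    ∑ m ∈ range (b ^ ℓ), Sb b (c * b ^ ℓ + m) = 2 * (2 * b - 1) ^ ℓ := by
  have h : ∑ m ∈ range (b ^ ℓ), Sb b (c * b ^ ℓ + m)
      = ∑ m ∈ range (b ^ ℓ), Sw (c :: padw b ℓ m) := by
    refine Finset.sum_congr rfl fun m hm => ?_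
    rw [Sb_eq_Sw, digits_rev_high hb hc hcb (Finset.mem_range.mp hm)]
  rw [h]
  have h1 := Block_rec hb (by omega : c ≠ 0) ℓ
  have h2 := TS_TO hb ℓ c hcb
  have h3 := SS_closed hb ℓ
  omega

lemma A_closed {b : ℕ} (hb : 2 ≤ b) (ℓ : ℕ) :
    ∀ x, 1 ≤ x → x ≤ b → Asum b (x * b ^ ℓ) = (2 * x - 1) * (2 * b - 1) ^ ℓ := by
  intro x
  induction x with
  | zero => intro h _; exact absurd h (by omega)
  | succ x ih =>
    intro _ hxb
    rcases Nat.eq_zero_or_pos x with rfl | hx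
    · have h0 : (0 + 1) * b ^ ℓ = b ^ ℓ := by ring
      rw [h0, A_pow hb]
      norm_num
    · have hxb' : x < b := by omega
      have h1 : (x + 1) * b ^ ℓ = x * b ^ ℓ + b ^ ℓ := by ring
      rw [h1, Asum_add, ih hx (by omega), Block_num hb hx hxb' ℓ]
      obtain ⟨ξ, rfl⟩ : ∃ ξ, x = ξ + 1 := ⟨x - 1, by omega⟩
      have e1 : 2 * (ξ + 1) - 1 = 2 * ξ + 1 := by omega
      have e2 : 2 * (ξ + 1 + 1) - 1 = 2 * ξ + 3 := by omega
      rw [e1, e2]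
      ring

lemma L1_num {b x k m : ℕ} (hb : 2 ≤ b) (hx : 0 < x) (hxb : x < b)
    (hm : m < b ^ k) :
    Sb b (x * b ^ (k+1) + m) = Sb b (x * b ^ k + m) + Sb b m := by
  have hm1 : m < b ^ (k+1) :=
    lt_of_lt_of_le hm (Nat.pow_le_pow_right (by omega) (by omega))
  have hp : padw b (k+1) m = 0 :: padw b k m := by
    have := padw_cons hb k 0 m hm
    simpa using this
  rw [Sb_eq_Sw, digits_rev_high hb hx hxb hm1, hp, L1w (by omega : x ≠ 0),
    Sb_eq_Sw, digits_rev_high hb hx hxb hm, Sw_padw hb hm]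

theorem stmt16 (b x ℓ r : ℕ) (hb : 2 ≤ b) (hx : 1 ≤ x) (hxb : x < b)
    (hℓ : 1 ≤ ℓ) (hr : r ≤ b ^ (ℓ - 1)) :
    Asum b (x * b ^ ℓ + r) =
      (2 * b - 2) * (2 * x - 1) * (2 * b - 1) ^ (ℓ - 1) +
        Asum b (x * b ^ (ℓ - 1) + r) + Asum b r := by
  obtain ⟨k, rfl⟩ : ∃ k, ℓ = k + 1 := ⟨ℓ - 1, by omega⟩
  simp only [Nat.add_sub_cancel] at hr ⊢
  have hsum : ∑ m ∈ range r, Sb b (x * b ^ (k+1) + m)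
      = (∑ m ∈ range r, Sb b (x * b ^ k + m)) + ∑ m ∈ range r, Sb b m := by
    rw [← Finset.sum_add_distrib]
    refine Finset.sum_congr rfl fun m hm => ?_
    exact L1_num hb hx hxb (lt_of_lt_of_le (Finset.mem_range.mp hm) hr)
  rw [Asum_add, Asum_add, hsum, A_closed hb (k+1) x hx (by omega),
    A_closed hb k x hx (by omega)]
  have hA : Asum b r = ∑ m ∈ range r, Sb b m := rfl
  rw [hA]
  obtain ⟨ξ, rfl⟩ : ∃ ξ, x = ξ + 1 := ⟨x - 1, by omega⟩
  obtain ⟨β, rfl⟩ : ∃ β, b = β + 2 := ⟨b - 2, by omega⟩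
  have e1 : 2 * (ξ + 1) - 1 = 2 * ξ + 1 := by omega
  have e2 : 2 * (β + 2) - 1 = 2 * β + 3 := by omega
  have e3 : 2 * (β + 2) - 2 = 2 * β + 2 := by omega
  rw [e1, e2, e3, pow_succ]
  ring
end
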